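/- arXiv:2309.02948 — 4 statements merged into one kernel-verified Lean document; each statement's English description precedes it below -/
import Mathlib

section
/- Fix integers d ≥ 1 and s ≥ 1. There exists a constant C > 0, depending only on d and s, such that the following holds for every prime p, every power q of p, every integer r ≥ 1 and every integer n ≥ 2. Let f(X) ∈ F_{q^r}(X) be a rational function of degree at most d which is not an n-th power of a rational function in closure(F_p)(X). Then for every finite set V ⊆ closure(F_p) of cardinality V_0, the number of vectors v = (v_1, …, v_{2s}) ∈ V^{2s} such that P_{v,f}(X) is an n-th power of some rational function in closure(F_p)(X) is at most C · V_0^s. -/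
open Polynomial

open scoped Classical

noncomputable section

namespace RestrictedCoords

variable {K L : Type*} [Field K] [Field L]

/-- The degree of a rational function: the maximum of the degrees of its numerator
and denominator (in lowest terms). -/
def ratDeg (f : RatFunc K) : ℕ := max f.num.natDegree f.denom.natDegree

/-- The order of `f` at `w`: the unique integer such that `(X - w) ^ (ordAt w f) * f`
extends to a rational function with neither a zero nor a pole at `w`.
(Here negative values correspond to poles.) -/
def ordAt (w : K) (f : RatFunc K) : ℤ :=
  (f.num.rootMultiplicity w : ℤ) - (f.denom.rootMultiplicity w : ℤ)

/-- `f` has a (finite) pole at `w`. -/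
def HasPoleAt (f : RatFunc K) (w : K) : Prop := f.denom.eval w = 0

/-- The image of a rational function under a field embedding. -/
def ratMap (φ : K →+* L) (f : RatFunc K) : RatFunc L :=
  algebraMap L[X] (RatFunc L) (f.num.map φ) / algebraMap L[X] (RatFunc L) (f.denom.map φ)

/-- The shifted rational function `f(X + v)`. -/
def shift (v : K) (f : RatFunc K) : RatFunc K :=
  algebraMap K[X] (RatFunc K) (f.num.comp (X + C v)) /
    algebraMap K[X] (RatFunc K) (f.denom.comp (X + C v))

/-- `P_{v,f}(X) = ∏_{i=1}^{s} f(X + v_i) / f(X + v_{s+i})`. -/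
def Pvf (s : ℕ) (f : RatFunc K) (v : Fin (s + s) → K) : RatFunc K :=
  ∏ i : Fin s, shift (v (i.castAdd s)) f / shift (v (i.addNat s)) f

/-- `L_{v,f}(X) = ∑_{i=1}^{s} (f(X + v_i) - f(X + v_{s+i}))`. -/
def Lvf (s : ℕ) (f : RatFunc K) (v : Fin (s + s) → K) : RatFunc K :=
  ∑ i : Fin s, (shift (v (i.castAdd s)) f - shift (v (i.addNat s)) f)

/-- Membership in the class `Q_{d,n}`: rational functions of degree at most `d`
which are not an `n`-th power of a rational function over the algebraic closure. -/
def MemQ (d n : ℕ) (f : RatFunc K) : Prop :=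
  ratDeg f ≤ d ∧
    ¬ ∃ g : RatFunc (AlgebraicClosure K),
        ratMap (algebraMap K (AlgebraicClosure K)) f = g ^ n

/-- Membership in the class `R_d`: rational functions of degree at most `d`
which have at least one finite pole (over the algebraic closure) whose order is not
a multiple of `p`. -/
def MemR (p d : ℕ) (f : RatFunc K) : Prop :=
  ratDeg f ≤ d ∧
    ∃ w : AlgebraicClosure K,
      HasPoleAt (ratMap (algebraMap K (AlgebraicClosure K)) f) w ∧
        ¬ (p : ℤ) ∣ ordAt w (ratMap (algebraMap K (AlgebraicClosure K)) f)

/-- Membership in the exceptional class `E`: rational functions of the form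
`α (h(X)^p - h(X)) + β X`. -/
def MemE (p : ℕ) (f : RatFunc L) : Prop :=
  ∃ α β : L, ∃ h : RatFunc L,
    f = RatFunc.C α * (h ^ p - h) + RatFunc.C β * RatFunc.X

/-- Membership in the class `P_d`: rational functions of degree `d` such that for
every nonzero `ω` the difference `f(X + ω) - f(X)` is not of the exceptional form
`α (g(X)^p - g(X)) + β X` over the algebraic closure. -/
def MemP (p d : ℕ) (f : RatFunc K) : Prop :=
  ratDeg f = d ∧
    ∀ ω : K, ω ≠ 0 →
      ¬ MemE p (ratMap (algebraMap K (AlgebraicClosure K)) (shift ω f - f))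

/-- The set `S_r(A)` of elements of `F_{q^r}` all of whose coordinates in the basis `θ`
belong to `A`. -/
def SrSet {Fq K : Type*} [Field Fq] [Fintype Fq] [Field K] [Algebra Fq K]
    {r : ℕ} (θ : Module.Basis (Fin r) Fq K) (A : Finset Fq) : Finset K :=
  (Fintype.piFinset fun _ : Fin r => A).image fun a => ∑ i, a i • θ i

/-- The mixed character sum `∑_{x ∈ T} χ(f₁(x)) ψ(f₂(x))`, where the points `x`
which are poles of `f₁` or `f₂` are excluded from the summation. -/
def charSum (χ : MulChar K ℂ) (ψ : AddChar K ℂ) (f₁ f₂ : RatFunc K)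
    (T : Finset K) : ℂ :=
  ∑ x ∈ T,
    if HasPoleAt f₁ x ∨ HasPoleAt f₂ x then 0
    else χ (f₁.eval (RingHom.id K) x) * ψ (f₂.eval (RingHom.id K) x)

/-- `κ_s(ρ) = (sρ(2ρ-1) + ρ - 1) / (4s(sρ+1))`. -/
def kappa (s : ℕ) (ρ : ℝ) : ℝ :=
  ((s : ℝ) * ρ * (2 * ρ - 1) + ρ - 1) / (4 * (s : ℝ) * ((s : ℝ) * ρ + 1))


-- translation comp nonzero
lemma comp_translate_ne_zero {P : L[X]} (hP : P ≠ 0) (v : L) : P.comp (X + C v) ≠ 0 := by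
  intro h
  apply hP
  have : (P.comp (X + C v)).comp (X - C v) = P := by
    rw [Polynomial.comp_assoc]
    simp [Polynomial.add_comp]
  rw [h, Polynomial.zero_comp] at this
  exact this.symm

lemma le_rm_comp_translate (P : L[X]) (hP : P ≠ 0) (b w : L) :
    P.rootMultiplicity b ≤ (P.comp (X + C w)).rootMultiplicity (b - w) := by
  rw [Polynomial.le_rootMultiplicity_iff (comp_translate_ne_zero hP w)]
  have h1 : (X - Polynomial.C b : L[X]) ^ (P.rootMultiplicity b) ∣ P :=
    Polynomial.pow_rootMultiplicity_dvd P b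
  obtain ⟨c, hc⟩ := h1
  have hthis : P.comp (X + C w) = ((X - C b) ^ (P.rootMultiplicity b)).comp (X + C w) * c.comp (X + C w) := by
    rw [← Polynomial.mul_comp, ← hc]
  have hcomp : ((X - C b : L[X]) ^ (P.rootMultiplicity b)).comp (X + C w)
      = (X - C (b - w)) ^ (P.rootMultiplicity b) := by
    rw [Polynomial.pow_comp, Polynomial.sub_comp, Polynomial.X_comp, Polynomial.C_comp, map_sub]
    ring_nf
  exact ⟨c.comp (X + C w), by rw [hthis, hcomp]⟩

lemma rm_comp_translate (P : L[X]) (hP : P ≠ 0) (a w : L) :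
    (P.comp (X + C w)).rootMultiplicity a = P.rootMultiplicity (a + w) := by
  apply le_antisymm
  · have h := le_rm_comp_translate (P.comp (X + C w)) (comp_translate_ne_zero hP w) a (-w)
    have hcc : (P.comp (X + C w)).comp (X + C (-w)) = P := by
      rw [Polynomial.comp_assoc]
      simp [Polynomial.add_comp]
    rw [hcc, sub_neg_eq_add] at h
    exact h
  · have h := le_rm_comp_translate P hP (a + w) w
    simpa using h

lemma rm_prod {ι : Type*} (x : L) (s : Finset ι) (g : ι → L[X]) (h : ∀ i ∈ s, g i ≠ 0) :
    (∏ i ∈ s, g i).rootMultiplicity x = ∑ i ∈ s, (g i).rootMultiplicity x := by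
  classical
  induction s using Finset.cons_induction with
  | empty => simp
  | cons a s ha ih =>
    rw [Finset.prod_cons, Finset.sum_cons,
      Polynomial.rootMultiplicity_mul (mul_ne_zero (h a (Finset.mem_cons_self a s))
        (Finset.prod_ne_zero_iff.2 fun i hi => h i (Finset.mem_cons_of_mem hi))),
      ih (fun i hi => h i (Finset.mem_cons_of_mem hi))]

lemma rm_pow (x : L) (P : L[X]) (n : ℕ) :
    (P ^ n).rootMultiplicity x = n * P.rootMultiplicity x := by
  classical
  rw [← Polynomial.count_roots, Polynomial.roots_pow, Multiset.count_nsmul,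
    Polynomial.count_roots]

-- Lemma F: n-th power of polynomial over alg closed field
lemma exists_pow_poly {L : Type*} [Field L] [IsAlgClosed L] (P : L[X]) (hP : P ≠ 0)
    {n : ℕ} (hn : 0 < n) (h : ∀ x, n ∣ P.rootMultiplicity x) : ∃ u : L[X], P = u ^ n := by
  classical
  have hsplit := IsAlgClosed.splits P
  have heq := hsplit.eq_prod_roots
  obtain ⟨T, hT⟩ := Multiset.exists_smul_of_dvd_count P.roots
    (fun a _ => by rw [Polynomial.count_roots]; exact h a)
  obtain ⟨e, he⟩ := IsAlgClosed.exists_pow_nat_eq P.leadingCoeff hn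
  refine ⟨C e * (T.map fun a => X - C a).prod, ?_⟩
  rw [mul_pow, ← map_pow, he, ← Multiset.prod_nsmul, ← Multiset.map_nsmul, ← hT, ← heq]


lemma ord_rep {F : RatFunc L} {p q : L[X]} (hp : p ≠ 0) (hq : q ≠ 0)
    (hF : F = algebraMap L[X] (RatFunc L) p / algebraMap L[X] (RatFunc L) q) (x : L) :
    ordAt x F = (p.rootMultiplicity x : ℤ) - q.rootMultiplicity x := by
  have hF0 : F ≠ 0 := by
    rw [hF]
    exact div_ne_zero (RatFunc.algebraMap_ne_zero hp) (RatFunc.algebraMap_ne_zero hq)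
  have hnum : F.num ≠ 0 := RatFunc.num_ne_zero hF0
  have hden : F.denom ≠ 0 := F.denom_ne_zero
  have hcross : F.num * q = p * F.denom := by
    apply RatFunc.algebraMap_injective
    rw [map_mul, map_mul]
    rw [← RatFunc.num_div_denom F] at hF
    rw [div_eq_div_iff (RatFunc.algebraMap_ne_zero hden) (RatFunc.algebraMap_ne_zero hq)] at hF
    exact hF
  have hrm := congrArg (rootMultiplicity x) hcross
  rw [Polynomial.rootMultiplicity_mul (mul_ne_zero hnum hq),
    Polynomial.rootMultiplicity_mul (mul_ne_zero hp hden)] at hrm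
  unfold ordAt
  omega


lemma ord_shift {F : RatFunc L} (hF : F ≠ 0) (v x : L) :
    ordAt x (shift v F) = ordAt (x + v) F := by
  have hnum : F.num ≠ 0 := RatFunc.num_ne_zero hF
  have hden : F.denom ≠ 0 := F.denom_ne_zero
  simp only [shift]
  rw [ord_rep (comp_translate_ne_zero hnum v) (comp_translate_ne_zero hden v) rfl x,
    rm_comp_translate _ hnum, rm_comp_translate _ hden]
  rfl

lemma ord_pow {g : RatFunc L} (hg : g ≠ 0) (n : ℕ) (x : L) :
    ordAt x (g ^ n) = n * ordAt x g := by
  have hnum : g.num ≠ 0 := RatFunc.num_ne_zero hg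
  have hden : g.denom ≠ 0 := g.denom_ne_zero
  have hgn : g ^ n = algebraMap L[X] (RatFunc L) (g.num ^ n) / algebraMap L[X] (RatFunc L) (g.denom ^ n) := by
    rw [map_pow, map_pow, ← div_pow, RatFunc.num_div_denom]
  rw [ord_rep (pow_ne_zero n hnum) (pow_ne_zero n hden) hgn x, rm_pow, rm_pow]
  unfold ordAt
  push_cast
  ring

lemma pvf_rep {F : RatFunc L} (hF : F ≠ 0) (s : ℕ) (v : Fin (s + s) → L) :
    Pvf s F v =
      algebraMap L[X] (RatFunc L)
          (∏ i : Fin s, F.num.comp (X + C (v (i.castAdd s))) * F.denom.comp (X + C (v (i.addNat s)))) /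
        algebraMap L[X] (RatFunc L)
          (∏ i : Fin s, F.denom.comp (X + C (v (i.castAdd s))) * F.num.comp (X + C (v (i.addNat s)))) := by
  have hnum : F.num ≠ 0 := RatFunc.num_ne_zero hF
  have hden : F.denom ≠ 0 := F.denom_ne_zero
  rw [map_prod, map_prod, ← Finset.prod_div_distrib]
  unfold Pvf shift
  apply Finset.prod_congr rfl
  intro i _
  have h1 := RatFunc.algebraMap_ne_zero (comp_translate_ne_zero hnum (v (i.castAdd s)))
  have h2 := RatFunc.algebraMap_ne_zero (comp_translate_ne_zero hden (v (i.castAdd s)))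
  have h3 := RatFunc.algebraMap_ne_zero (comp_translate_ne_zero hnum (v (i.addNat s)))
  have h4 := RatFunc.algebraMap_ne_zero (comp_translate_ne_zero hden (v (i.addNat s)))
  rw [map_mul, map_mul]
  field_simp

lemma ord_pvf {F : RatFunc L} (hF : F ≠ 0) (s : ℕ) (v : Fin (s + s) → L) (x : L) :
    ordAt x (Pvf s F v) =
      ∑ i : Fin s, (ordAt (x + v (i.castAdd s)) F - ordAt (x + v (i.addNat s)) F) := by
  have hnum : F.num ≠ 0 := RatFunc.num_ne_zero hF
  have hden : F.denom ≠ 0 := F.denom_ne_zero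
  have h1 : ∀ w : L, F.num.comp (X + C w) ≠ 0 := comp_translate_ne_zero hnum
  have h2 : ∀ w : L, F.denom.comp (X + C w) ≠ 0 := comp_translate_ne_zero hden
  rw [ord_rep (Finset.prod_ne_zero_iff.2 fun i _ => mul_ne_zero (h1 _) (h2 _))
    (Finset.prod_ne_zero_iff.2 fun i _ => mul_ne_zero (h2 _) (h1 _)) (pvf_rep hF s v) x]
  rw [rm_prod x _ _ (fun i _ => mul_ne_zero (h1 _) (h2 _)),
    rm_prod x _ _ (fun i _ => mul_ne_zero (h2 _) (h1 _))]
  push_cast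
  rw [← Finset.sum_sub_distrib]
  apply Finset.sum_congr rfl
  intro i _
  rw [Polynomial.rootMultiplicity_mul (mul_ne_zero (h1 _) (h2 _)),
    Polynomial.rootMultiplicity_mul (mul_ne_zero (h2 _) (h1 _))]
  unfold ordAt
  rw [← rm_comp_translate F.num hnum x (v (i.castAdd s)),
    ← rm_comp_translate F.denom hden x (v (i.castAdd s)),
    ← rm_comp_translate F.num hnum x (v (i.addNat s)),
    ← rm_comp_translate F.denom hden x (v (i.addNat s))]
  push_cast
  ring

lemma pvf_ne_zero {F : RatFunc L} (hF : F ≠ 0) (s : ℕ) (v : Fin (s + s) → L) :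
    Pvf s F v ≠ 0 := by
  have hnum : F.num ≠ 0 := RatFunc.num_ne_zero hF
  have hden : F.denom ≠ 0 := F.denom_ne_zero
  rw [pvf_rep hF s v]
  exact div_ne_zero
    (RatFunc.algebraMap_ne_zero (Finset.prod_ne_zero_iff.2 fun i _ =>
      mul_ne_zero (comp_translate_ne_zero hnum _) (comp_translate_ne_zero hden _)))
    (RatFunc.algebraMap_ne_zero (Finset.prod_ne_zero_iff.2 fun i _ =>
      mul_ne_zero (comp_translate_ne_zero hden _) (comp_translate_ne_zero hnum _)))

lemma dvd_ord_sum {F : RatFunc L} (hF : F ≠ 0) {s n : ℕ} (hn : n ≠ 0)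
    {v : Fin (s + s) → L} {g : RatFunc L} (hg : Pvf s F v = g ^ n) (x : L) :
    (n : ℤ) ∣ ∑ i : Fin s, (ordAt (x + v (i.castAdd s)) F - ordAt (x + v (i.addNat s)) F) := by
  have hg0 : g ≠ 0 := by
    intro h
    exact pvf_ne_zero hF s v (by rw [hg, h, zero_pow hn])
  rw [← ord_pvf hF s v x, hg, ord_pow hg0]
  exact Dvd.intro _ rfl

lemma exists_bad_point {L : Type*} [Field L] [IsAlgClosed L] {F : RatFunc L} (hF : F ≠ 0)
    {n : ℕ} (hn : 0 < n) (h : ¬ ∃ g : RatFunc L, F = g ^ n) :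
    ∃ w : L, ¬ (n : ℤ) ∣ ordAt w F := by
  by_contra hall
  push_neg at hall
  apply h
  have hnum : F.num ≠ 0 := RatFunc.num_ne_zero hF
  have hden : F.denom ≠ 0 := F.denom_ne_zero
  have hsep : ∀ x : L, F.num.rootMultiplicity x = 0 ∨ F.denom.rootMultiplicity x = 0 := by
    intro x
    by_contra hboth
    push_neg at hboth
    have d1 : (X - C x) ∣ F.num := Polynomial.dvd_iff_isRoot.2
      ((Polynomial.rootMultiplicity_pos hnum).1 (Nat.pos_of_ne_zero hboth.1))
    have d2 : (X - C x) ∣ F.denom := Polynomial.dvd_iff_isRoot.2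
      ((Polynomial.rootMultiplicity_pos hden).1 (Nat.pos_of_ne_zero hboth.2))
    exact Polynomial.not_isUnit_X_sub_C x ((RatFunc.isCoprime_num_denom F).isUnit_of_dvd' d1 d2)
  have hnums : ∀ x : L, n ∣ F.num.rootMultiplicity x := by
    intro x
    have hx := hall x
    unfold ordAt at hx
    rcases hsep x with h0 | h0
    · rw [h0]
      exact dvd_zero n
    · rw [h0] at hx
      simp only [Nat.cast_zero, sub_zero] at hx
      exact_mod_cast hx
  have hdens : ∀ x : L, n ∣ F.denom.rootMultiplicity x := by
    intro x
    have hx := hall x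
    unfold ordAt at hx
    rcases hsep x with h0 | h0
    · rw [h0] at hx
      simp only [Nat.cast_zero, zero_sub, dvd_neg] at hx
      exact_mod_cast hx
    · rw [h0]
      exact dvd_zero n
  obtain ⟨u, hu⟩ := exists_pow_poly F.num hnum hn hnums
  obtain ⟨w, hw⟩ := exists_pow_poly F.denom hden hn hdens
  refine ⟨algebraMap L[X] (RatFunc L) u / algebraMap L[X] (RatFunc L) w, ?_⟩
  rw [div_pow, ← map_pow, ← map_pow, ← hu, ← hw, RatFunc.num_div_denom]

/-- The set of zeros and poles of `F`. -/
def Wset (F : RatFunc L) : Finset L := F.num.roots.toFinset ∪ F.denom.roots.toFinset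

lemma mem_Wset_of_ord_ne_zero {F : RatFunc L} (hF : F ≠ 0) {y : L} (hy : ordAt y F ≠ 0) :
    y ∈ Wset F := by
  have hnum : F.num ≠ 0 := RatFunc.num_ne_zero hF
  have hden : F.denom ≠ 0 := F.denom_ne_zero
  unfold ordAt at hy
  have : F.num.rootMultiplicity y ≠ 0 ∨ F.denom.rootMultiplicity y ≠ 0 := by omega
  rcases this with h | h
  · exact Finset.mem_union_left _ (Multiset.mem_toFinset.2 ((Polynomial.mem_roots hnum).2
      ((Polynomial.rootMultiplicity_pos hnum).1 (Nat.pos_of_ne_zero h))))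
  · exact Finset.mem_union_right _ (Multiset.mem_toFinset.2 ((Polynomial.mem_roots hden).2
      ((Polynomial.rootMultiplicity_pos hden).1 (Nat.pos_of_ne_zero h))))

lemma partner {F : RatFunc L} (hF : F ≠ 0) {n s : ℕ} (hn : n ≠ 0)
    {v : Fin (s + s) → L} {g : RatFunc L} (hg : Pvf s F v = g ^ n)
    {w₀ : L} (hw : ¬ (n : ℤ) ∣ ordAt w₀ F) (i : Fin (s + s)) :
    ∃ j, j ≠ i ∧ v i - v j ∈ Finset.image₂ (· - ·) (Wset F) (Wset F) := by
  by_contra hcon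
  push_neg at hcon
  have hw0ne : ordAt w₀ F ≠ 0 := fun h => hw (h ▸ dvd_zero _)
  have hw0mem : w₀ ∈ Wset F := mem_Wset_of_ord_ne_zero hF hw0ne
  have hzero : ∀ j, j ≠ i → ordAt (w₀ - v i + v j) F = 0 := by
    intro j hj
    by_contra hne
    have hymem := mem_Wset_of_ord_ne_zero hF hne
    have : v i - v j ∈ Finset.image₂ (· - ·) (Wset F) (Wset F) := by
      have : v i - v j = w₀ - (w₀ - v i + v j) := by ring
      rw [this]
      exact Finset.mem_image₂_of_mem hw0mem hymem
    exact hcon j hj this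
  have hdvd := dvd_ord_sum hF hn hg (w₀ - v i)
  rw [Finset.sum_sub_distrib] at hdvd
  by_cases hlt : (i : ℕ) < s
  · set i₀ : Fin s := ⟨(i : ℕ), hlt⟩ with hi₀
    have hcast : i₀.castAdd s = i := by
      apply Fin.ext
      simp [hi₀]
    have hsum1 : ∑ i' : Fin s, ordAt (w₀ - v i + v (i'.castAdd s)) F = ordAt w₀ F := by
      rw [Finset.sum_eq_single i₀]
      · rw [hcast]
        congr 1
        ring
      · intro j' _ hj'
        apply hzero
        intro hh
        apply hj'
        apply Fin.ext
        have := congrArg Fin.val hh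
        simp at this ⊢
        omega
      · intro h
        exact absurd (Finset.mem_univ i₀) h
    have hsum2 : ∑ i' : Fin s, ordAt (w₀ - v i + v (i'.addNat s)) F = 0 := by
      apply Finset.sum_eq_zero
      intro j' _
      apply hzero
      intro hh
      have := congrArg Fin.val hh
      simp at this
      omega
    rw [hsum1, hsum2, sub_zero] at hdvd
    exact hw hdvd
  · set i₀ : Fin s := ⟨(i : ℕ) - s, by omega⟩ with hi₀
    have hcast : i₀.addNat s = i := by
      apply Fin.ext
      simp [hi₀]
      omega
    have hsum1 : ∑ i' : Fin s, ordAt (w₀ - v i + v (i'.castAdd s)) F = 0 := by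
      apply Finset.sum_eq_zero
      intro j' _
      apply hzero
      intro hh
      have := congrArg Fin.val hh
      simp at this
      omega
    have hsum2 : ∑ i' : Fin s, ordAt (w₀ - v i + v (i'.addNat s)) F = ordAt w₀ F := by
      rw [Finset.sum_eq_single i₀]
      · rw [hcast]
        congr 1
        ring
      · intro j' _ hj'
        apply hzero
        intro hh
        apply hj'
        apply Fin.ext
        have := congrArg Fin.val hh
        simp only [Fin.val_addNat, hi₀, Fin.val_mk] at this ⊢
        omega
      · intro h
        exact absurd (Finset.mem_univ i₀) h
    rw [hsum1, hsum2, zero_sub, dvd_neg] at hdvd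
    exact hw hdvd

section Comb

variable {m : ℕ}

def cyc (j : Fin m → Fin m) (x : Fin m) : Finset (Fin m) :=
  (Finset.range m).image (fun t => j^[t] x)

def rmin (j : Fin m → Fin m) (x : Fin m) : Fin m :=
  if h : (cyc j x).Nonempty then (cyc j x).min' h else x

def tpick (j : Fin m → Fin m) (x : Fin m) : ℕ :=
  if h : ∃ t, t < m ∧ j^[t] x = rmin j x then h.choose else 0

def rho (j : Fin m → Fin m) (i : Fin m) : Fin m := j^[tpick j (j^[m] i) + m] i

def Sset (j : Fin m → Fin m) : Finset (Fin m) := Finset.image (rho j) Finset.univ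

lemma mem_cyc_self (hm : 0 < m) (j : Fin m → Fin m) (x : Fin m) : x ∈ cyc j x :=
  Finset.mem_image.2 ⟨0, Finset.mem_range.2 hm, rfl⟩

lemma cyc_nonempty (hm : 0 < m) (j : Fin m → Fin m) (x : Fin m) : (cyc j x).Nonempty :=
  ⟨x, mem_cyc_self hm j x⟩

lemma rmin_mem (hm : 0 < m) (j : Fin m → Fin m) (x : Fin m) : rmin j x ∈ cyc j x := by
  rw [rmin, dif_pos (cyc_nonempty hm j x)]
  exact Finset.min'_mem _ _

lemma tpick_spec (hm : 0 < m) (j : Fin m → Fin m) (x : Fin m) :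
    tpick j x < m ∧ j^[tpick j x] x = rmin j x := by
  have hex : ∃ t, t < m ∧ j^[t] x = rmin j x := by
    obtain ⟨t, ht, hjt⟩ := Finset.mem_image.1 (rmin_mem hm j x)
    exact ⟨t, Finset.mem_range.1 ht, hjt⟩
  rw [tpick, dif_pos hex]
  exact ⟨hex.choose_spec.1, hex.choose_spec.2⟩

lemma exists_period (j : Fin m → Fin m) (x : Fin m) (hm : 0 < m) :
    ∃ c, 0 < c ∧ c ≤ m ∧ j^[c] (j^[m] x) = j^[m] x := by
  have hcard : Fintype.card (Fin m) < Fintype.card (Fin (m + 1)) := by simp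
  obtain ⟨a, b, hab, heq⟩ := Fintype.exists_ne_map_eq_of_card_lt
    (fun t : Fin (m + 1) => j^[(t : ℕ)] x) hcard
  have key : ∀ a' b' : ℕ, a' < b' → b' ≤ m → j^[a'] x = j^[b'] x →
      j^[b' - a'] (j^[m] x) = j^[m] x := by
    intro a' b' hlt hbm he
    calc j^[b' - a'] (j^[m] x) = j^[(b' - a') + m] x := (Function.iterate_add_apply j _ m x).symm
      _ = j^[(m - a') + b'] x := by congr 1; omega
      _ = j^[m - a'] (j^[b'] x) := Function.iterate_add_apply j _ _ x
      _ = j^[m - a'] (j^[a'] x) := by rw [← he]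
      _ = j^[(m - a') + a'] x := (Function.iterate_add_apply j _ _ x).symm
      _ = j^[m] x := by congr 1; omega
  rcases Ne.lt_or_gt (fun h : (a : ℕ) = (b : ℕ) => hab (Fin.ext h)) with h | h
  · exact ⟨(b : ℕ) - (a : ℕ), by omega, by omega, key a b h (by omega) heq⟩
  · exact ⟨(a : ℕ) - (b : ℕ), by omega, by omega, key b a h (by omega) heq.symm⟩

lemma iter_mod {j : Fin m → Fin m} {c : ℕ} {x : Fin m} (hc : 0 < c) (hx : j^[c] x = x)
    (t : ℕ) : j^[t] x = j^[t % c] x := by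
  conv_lhs => rw [← Nat.mod_add_div t c]
  rw [Function.iterate_add_apply, Function.iterate_mul, Function.iterate_fixed hx]

lemma mem_cyc_iterate {j : Fin m → Fin m} {c : ℕ} {x : Fin m} (hc : 0 < c) (hcm : c ≤ m)
    (hx : j^[c] x = x) (t : ℕ) : j^[t] x ∈ cyc j x := by
  rw [iter_mod hc hx t]
  exact Finset.mem_image.2 ⟨t % c, Finset.mem_range.2 (lt_of_lt_of_le (Nat.mod_lt t hc) hcm), rfl⟩

lemma per_of_mem {j : Fin m → Fin m} {c : ℕ} {x y : Fin m} (hx : j^[c] x = x)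
    (hy : y ∈ cyc j x) : j^[c] y = y := by
  obtain ⟨t, _, rfl⟩ := Finset.mem_image.1 hy
  rw [← Function.iterate_add_apply, add_comm, Function.iterate_add_apply, hx]

lemma mem_cyc_symm {j : Fin m → Fin m} {c : ℕ} {x y : Fin m} (hc : 0 < c) (hcm : c ≤ m)
    (hx : j^[c] x = x) (hy : y ∈ cyc j x) : x ∈ cyc j y := by
  obtain ⟨t, _, rfl⟩ := Finset.mem_image.1 hy
  by_cases ha0 : t % c = 0
  · have : j^[t] x = x := by rw [iter_mod hc hx t, ha0]; rfl
    rw [this]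
    exact mem_cyc_self (by omega) j x
  · have hu : c - t % c < c := by
      have := Nat.mod_lt t hc
      omega
    have hiter : j^[c - t % c] (j^[t] x) = x := by
      rw [← Function.iterate_add_apply]
      have hdiv := Nat.mod_add_div t c
      have heq : c - t % c + t = c * (t / c + 1) := by
        have := Nat.mod_lt t hc
        ring_nf
        omega
      rw [heq, Function.iterate_mul, Function.iterate_fixed hx]
    exact Finset.mem_image.2 ⟨c - t % c, Finset.mem_range.2 (by omega), hiter⟩

lemma cyc_subset {j : Fin m → Fin m} {c : ℕ} {x y : Fin m} (hc : 0 < c) (hcm : c ≤ m)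
    (hx : j^[c] x = x) (hy : y ∈ cyc j x) : cyc j y ⊆ cyc j x := by
  obtain ⟨t, _, rfl⟩ := Finset.mem_image.1 hy
  intro z hz
  obtain ⟨u, _, rfl⟩ := Finset.mem_image.1 hz
  rw [← Function.iterate_add_apply]
  exact mem_cyc_iterate hc hcm hx (u + t)

lemma cyc_eq {j : Fin m → Fin m} {c : ℕ} {x y : Fin m} (hc : 0 < c) (hcm : c ≤ m)
    (hx : j^[c] x = x) (hy : y ∈ cyc j x) : cyc j y = cyc j x :=
  Finset.Subset.antisymm (cyc_subset hc hcm hx hy)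
    (cyc_subset hc hcm (per_of_mem hx hy) (mem_cyc_symm hc hcm hx hy))

lemma rmin_congr {j : Fin m → Fin m} {x y : Fin m} (h : cyc j x = cyc j y)
    (hx : (cyc j x).Nonempty) : rmin j x = rmin j y := by
  rw [rmin, rmin, dif_pos hx, dif_pos (h ▸ hx)]
  congr 1

lemma rho_eq (hm : 0 < m) (j : Fin m → Fin m) (i : Fin m) :
    rho j i = rmin j (j^[m] i) := by
  rw [rho, Function.iterate_add_apply]
  exact (tpick_spec hm j (j^[m] i)).2

lemma Sset_elem (hm : 0 < m) {j : Fin m → Fin m} {r : Fin m} (hr : r ∈ Sset j) :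
    ∃ c, 0 < c ∧ c ≤ m ∧ j^[c] r = r ∧ rmin j r = r ∧ r ∈ cyc j r := by
  obtain ⟨i, _, rfl⟩ := Finset.mem_image.1 hr
  rw [rho_eq hm j i]
  set x := j^[m] i
  obtain ⟨c, hc, hcm, hper⟩ := exists_period j i hm
  have hrmem : rmin j x ∈ cyc j x := rmin_mem hm j x
  have hcyceq : cyc j (rmin j x) = cyc j x := cyc_eq hc hcm hper hrmem
  have hrper : j^[c] (rmin j x) = rmin j x := per_of_mem hper hrmem
  exact ⟨c, hc, hcm, hrper, rmin_congr hcyceq (cyc_nonempty hm j _), by rw [hcyceq]; exact hrmem⟩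

lemma card_S (hm : 0 < m) {j : Fin m → Fin m} (hj : ∀ i, j i ≠ i) :
    2 * (Sset j).card ≤ m := by
  have hcyc2 : ∀ r ∈ Sset j, 2 ≤ (cyc j r).card := by
    intro r hr
    obtain ⟨c, hc, hcm, hper, _, hmem⟩ := Sset_elem hm hr
    have hjr : j r ∈ cyc j r := by
      have := mem_cyc_iterate hc hcm hper 1
      simpa using this
    refine Finset.one_lt_card.2 ⟨j r, hjr, r, hmem, hj r⟩
  have hdisj : ∀ r ∈ Sset j, ∀ r' ∈ Sset j, r ≠ r' → Disjoint (cyc j r) (cyc j r') := by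
    intro r hr r' hr' hne
    obtain ⟨c, hc, hcm, hper, hrmin, _⟩ := Sset_elem hm hr
    obtain ⟨c', hc', hcm', hper', hrmin', _⟩ := Sset_elem hm hr'
    rw [Finset.disjoint_left]
    intro z hz hz'
    apply hne
    have h1 : cyc j z = cyc j r := cyc_eq hc hcm hper hz
    have h2 : cyc j z = cyc j r' := cyc_eq hc' hcm' hper' hz'
    calc r = rmin j r := hrmin.symm
    _ = rmin j r' := rmin_congr (h1 ▸ h2) (cyc_nonempty hm j r)
    _ = r' := hrmin'
  calc 2 * (Sset j).card = ∑ _r ∈ Sset j, 2 := by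
        rw [Finset.sum_const, smul_eq_mul, mul_comm]
    _ ≤ ∑ r ∈ Sset j, (cyc j r).card := Finset.sum_le_sum hcyc2
    _ = ((Sset j).biUnion (cyc j)).card := (Finset.card_biUnion hdisj).symm
    _ ≤ (Finset.univ : Finset (Fin m)).card := Finset.card_le_univ _
    _ = m := by simp

lemma recon {G : Type*} [AddCommGroup G] {j : Fin m → Fin m} {δ : Fin m → G}
    {v : Fin m → G} (hv : ∀ i, v i = v (j i) + δ i) (k : ℕ) (i : Fin m) :
    v i = v (j^[k] i) + ∑ u ∈ Finset.range k, δ (j^[u] i) := by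
  induction k with
  | zero => simp
  | succ k ih =>
    rw [ih, Finset.sum_range_succ, Function.iterate_succ_apply', hv (j^[k] i)]
    abel

end Comb

section Count

variable {G : Type*} [AddCommGroup G] [DecidableEq G]

def jfun {m : ℕ} (Δ : Finset G) (v : Fin m → G) : Fin m → Fin m := fun i =>
  if h : ∃ j, j ≠ i ∧ v i - v j ∈ Δ then h.choose else i

lemma jfun_spec {m : ℕ} {Δ : Finset G} {v : Fin m → G} {i : Fin m}
    (h : ∃ j, j ≠ i ∧ v i - v j ∈ Δ) :
    jfun Δ v i ≠ i ∧ v i - v (jfun Δ v i) ∈ Δ := by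
  rw [jfun, dif_pos h]
  exact ⟨h.choose_spec.1, h.choose_spec.2⟩

lemma count_main (s : ℕ) (hs : 1 ≤ s) (Δ V : Finset G) (hV : V.Nonempty) :
    ((Fintype.piFinset fun _ : Fin (s + s) => V).filter
        fun v => ∀ i, ∃ j, j ≠ i ∧ v i - v j ∈ Δ).card ≤
      (s + s) ^ (s + s) * Δ.card ^ (s + s) * V.card ^ s := by
  classical
  set m := s + s with hm
  have hm0 : 0 < m := by omega
  set P := (Fintype.piFinset fun _ : Fin m => V).filter
      fun v => ∀ i, ∃ j, j ≠ i ∧ v i - v j ∈ Δ with hP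
  set F : (Fin m → G) → (Fin m → Fin m) × (Fin m → G) × (Fin m → G) := fun v =>
    (jfun Δ v, fun i => v i - v (jfun Δ v i),
      fun i => if i ∈ Sset (jfun Δ v) then v i else 0) with hF
  set J : Finset (Fin m → Fin m) := Finset.univ.filter fun j => ∀ i, j i ≠ i with hJ
  set Q := J.biUnion (fun j => {j} ×ˢ ((Fintype.piFinset fun _ : Fin m => Δ) ×ˢ
      (Fintype.piFinset fun i => if i ∈ Sset j then V else {0}))) with hQ
  have hmaps : ∀ v ∈ P, F v ∈ Q := by
    intro v hv
    rw [hP, Finset.mem_filter] at hv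
    obtain ⟨hpi, hpart⟩ := hv
    have hspec := fun i => jfun_spec (hpart i)
    rw [hQ, Finset.mem_biUnion]
    refine ⟨jfun Δ v, ?_, ?_⟩
    · rw [hJ, Finset.mem_filter]
      exact ⟨Finset.mem_univ _, fun i => (hspec i).1⟩
    · rw [Finset.mem_product]
      refine ⟨Finset.mem_singleton_self _, ?_⟩
      rw [Finset.mem_product]
      constructor
      · rw [Fintype.mem_piFinset]
        exact fun i => (hspec i).2
      · rw [Fintype.mem_piFinset]
        intro i
        by_cases h : i ∈ Sset (jfun Δ v)
        · simp only [hF, if_pos h]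
          exact (Fintype.mem_piFinset.1 hpi) i
        · simp only [hF, if_neg h]
          exact Finset.mem_singleton_self 0
  have hinj : Set.InjOn F ↑P := by
    intro v hv v' hv' heq
    rw [Finset.mem_coe, hP, Finset.mem_filter] at hv hv'
    have hj : jfun Δ v = jfun Δ v' := congrArg Prod.fst heq
    have hδ : (fun i => v i - v (jfun Δ v i)) = (fun i => v' i - v' (jfun Δ v' i)) :=
      congrArg (fun p => p.2.1) heq
    have hw : (fun i => if i ∈ Sset (jfun Δ v) then v i else 0) =
        (fun i => if i ∈ Sset (jfun Δ v') then v' i else 0) :=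
      congrArg (fun p => p.2.2) heq
    set j := jfun Δ v with hjdef
    have halg : ∀ (w : Fin m → G) (u : Fin m), w u = w (j u) + (w u - w (j u)) := by
      intro w u
      abel
    funext i
    have hrec := recon (j := j) (δ := fun u => v u - v (j u)) (v := v)
      (fun u => halg v u) (tpick j (j^[m] i) + m) i
    have hrec' := recon (j := j) (δ := fun u => v' u - v' (j u)) (v := v')
      (fun u => halg v' u) (tpick j (j^[m] i) + m) i
    have hrho : j^[tpick j (j^[m] i) + m] i = rho j i := rfl
    rw [hrho] at hrec hrec'
    have hrmem : rho j i ∈ Sset j := Finset.mem_image_of_mem _ (Finset.mem_univ i)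
    have hv_eq : v (rho j i) = v' (rho j i) := by
      have := congrFun hw (rho j i)
      rw [if_pos hrmem] at this
      rw [← hj] at this
      rw [if_pos hrmem] at this
      exact this
    have hδ_eq : ∀ u, v u - v (j u) = v' u - v' (j u) := by
      intro u
      have := congrFun hδ u
      rw [← hj] at this
      exact this
    rw [hrec, hrec', hv_eq]
    congr 1
    exact Finset.sum_congr rfl fun u _ => hδ_eq _
  calc P.card ≤ Q.card := Finset.card_le_card_of_injOn F hmaps hinj
    _ ≤ ∑ j ∈ J, ({j} ×ˢ ((Fintype.piFinset fun _ : Fin m => Δ) ×ˢ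
          (Fintype.piFinset fun i => if i ∈ Sset j then V else {0}))).card :=
        Finset.card_biUnion_le
    _ ≤ ∑ _j ∈ J, Δ.card ^ m * V.card ^ s := by
        apply Finset.sum_le_sum
        intro j hj
        rw [Finset.card_product, Finset.card_product, Finset.card_singleton, one_mul,
          Fintype.card_piFinset, Fintype.card_piFinset]
        simp only [Finset.prod_const, Finset.card_univ, Fintype.card_fin]
        apply Nat.mul_le_mul_left
        have hprod : (∏ i : Fin m, (if i ∈ Sset j then V else {0}).card)
            = V.card ^ (Sset j).card := by
          calc (∏ i : Fin m, (if i ∈ Sset j then V else {0}).card)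
              = ∏ i ∈ Sset j, (if i ∈ Sset j then V else ({0} : Finset G)).card := by
                refine (Finset.prod_subset (Finset.subset_univ _) ?_).symm
                intro x _ hx
                rw [if_neg hx, Finset.card_singleton]
            _ = ∏ i ∈ Sset j, V.card := Finset.prod_congr rfl fun i hi => by rw [if_pos hi]
            _ = V.card ^ (Sset j).card := Finset.prod_const _
        rw [hprod]
        apply Nat.pow_le_pow_right (Finset.card_pos.2 hV)
        have hjfree : ∀ i, j i ≠ i := by
          rw [hJ, Finset.mem_filter] at hj
          exact hj.2
        have := card_S hm0 hjfree
        omega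
    _ ≤ m ^ m * (Δ.card ^ m * V.card ^ s) := by
        rw [Finset.sum_const, smul_eq_mul]
        apply Nat.mul_le_mul_right
        calc J.card ≤ (Finset.univ : Finset (Fin m → Fin m)).card := Finset.card_le_univ _
          _ = m ^ m := by rw [Finset.card_univ, Fintype.card_fun]; simp
    _ = m ^ m * Δ.card ^ m * V.card ^ s := by ring

end Count

lemma rep_cross {F : RatFunc L} {p q : L[X]} (hq : q ≠ 0)
    (hF : F = algebraMap L[X] (RatFunc L) p / algebraMap L[X] (RatFunc L) q) :
    F.num * q = p * F.denom := by
  apply RatFunc.algebraMap_injective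
  rw [map_mul, map_mul]
  rw [← RatFunc.num_div_denom F] at hF
  rw [div_eq_div_iff (RatFunc.algebraMap_ne_zero F.denom_ne_zero)
    (RatFunc.algebraMap_ne_zero hq)] at hF
  exact hF

lemma Wset_card_le {φ : K →+* L} {f : RatFunc K} (hf : f ≠ 0) {d : ℕ}
    (hdeg : ratDeg f ≤ d) : (Wset (ratMap φ f)).card ≤ d + d := by
  set F := ratMap φ f with hFdef
  have hp : f.num.map φ ≠ 0 := by
    simpa using Polynomial.map_ne_zero (RatFunc.num_ne_zero hf) (f := φ)
  have hq : f.denom.map φ ≠ 0 := by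
    simpa using Polynomial.map_ne_zero f.denom_ne_zero (f := φ)
  have hcross : F.num * (f.denom.map φ) = (f.num.map φ) * F.denom := rep_cross hq rfl
  have hnumdvd : F.num ∣ f.num.map φ :=
    (RatFunc.isCoprime_num_denom F).dvd_of_dvd_mul_right ⟨_, hcross.symm⟩
  have hdendvd : F.denom ∣ f.denom.map φ := by
    apply ((RatFunc.isCoprime_num_denom F).symm).dvd_of_dvd_mul_right (z := F.num)
    exact ⟨f.num.map φ, by linear_combination hcross⟩
  have hnumdeg : F.num.natDegree ≤ d := by
    calc F.num.natDegree ≤ (f.num.map φ).natDegree := Polynomial.natDegree_le_of_dvd hnumdvd hp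
      _ = f.num.natDegree := Polynomial.natDegree_map φ
      _ ≤ d := le_trans (le_max_left _ _) hdeg
  have hdendeg : F.denom.natDegree ≤ d := by
    calc F.denom.natDegree ≤ (f.denom.map φ).natDegree := Polynomial.natDegree_le_of_dvd hdendvd hq
      _ = f.denom.natDegree := Polynomial.natDegree_map φ
      _ ≤ d := le_trans (le_max_right _ _) hdeg
  calc (Wset F).card ≤ F.num.roots.toFinset.card + F.denom.roots.toFinset.card :=
        Finset.card_union_le _ _
    _ ≤ Multiset.card F.num.roots + Multiset.card F.denom.roots :=
        Nat.add_le_add (Multiset.toFinset_card_le _) (Multiset.toFinset_card_le _)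
    _ ≤ F.num.natDegree + F.denom.natDegree :=
        Nat.add_le_add (Polynomial.card_roots' _) (Polynomial.card_roots' _)
    _ ≤ d + d := Nat.add_le_add hnumdeg hdendeg


/-- Lemma 4.1 of the paper: for `f ∈ Q_{d,n}`, the number of vectors
`v ∈ V^{2s}` for which `P_{v,f}` is an `n`-th power over the algebraic closure
is `O(V₀^s)`, uniformly in `p`, `q`, `r`, `n` and `V`. -/
theorem statement_4 (d s : ℕ) (hd : 1 ≤ d) (hs : 1 ≤ s) :
    ∃ C : ℝ, 0 < C ∧
      ∀ (p q a : ℕ), p.Prime → 0 < a → q = p ^ a →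
      ∀ (r : ℕ), 1 ≤ r →
      ∀ (n : ℕ), 2 ≤ n →
      ∀ (K : Type) [Field K] [Fintype K], Fintype.card K = q ^ r →
      ∀ (f : RatFunc K), MemQ d n f →
      ∀ (V : Finset (AlgebraicClosure K)),
        (Set.ncard {v : Fin (s + s) → AlgebraicClosure K |
            (∀ i, v i ∈ V) ∧
              ∃ g : RatFunc (AlgebraicClosure K),
                Pvf s (ratMap (algebraMap K (AlgebraicClosure K)) f) v = g ^ n} : ℝ)
          ≤ C * (V.card : ℝ) ^ s := by
  classical
  set Cnat : ℕ := (s + s) ^ (s + s) * ((2 * d) * (2 * d)) ^ (s + s) with hCnat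
  have hCpos : 0 < Cnat := by
    have h1 : 0 < s + s := by omega
    have h2 : 0 < (2 * d) * (2 * d) := by positivity
    exact Nat.mul_pos (Nat.pow_pos h1) (Nat.pow_pos h2)
  refine ⟨(Cnat : ℝ), by exact_mod_cast hCpos, ?_⟩
  intro p q a hp ha hqa r hr n hn K _ _ hcard f hf V
  set F := ratMap (algebraMap K (AlgebraicClosure K)) f with hFdef
  obtain ⟨hdeg, hpow⟩ := hf
  have hn0 : n ≠ 0 := by omega
  have hF : F ≠ 0 := by
    intro h
    exact hpow ⟨0, by rw [zero_pow hn0]; exact h⟩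
  have hf0 : f ≠ 0 := by
    intro h
    apply hF
    rw [hFdef, h, ratMap]
    simp
  obtain ⟨w₀, hw₀⟩ := exists_bad_point hF (by omega : 0 < n) (by exact hpow)
  set Δ : Finset (AlgebraicClosure K) := Finset.image₂ (· - ·) (Wset F) (Wset F) with hΔ
  rcases Finset.eq_empty_or_nonempty V with hV | hV
  · have hempty : {v : Fin (s + s) → AlgebraicClosure K |
        (∀ i, v i ∈ V) ∧ ∃ g : RatFunc (AlgebraicClosure K), Pvf s F v = g ^ n} = ∅ := by
      rw [Set.eq_empty_iff_forall_notMem]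
      rintro v ⟨hvV, -⟩
      have := hvV ⟨0, by omega⟩
      rw [hV] at this
      exact absurd this (Finset.notMem_empty _)
    rw [hempty, hV]
    simp only [Set.ncard_empty, Nat.cast_zero, Finset.card_empty]
    positivity
  · set P := (Fintype.piFinset fun _ : Fin (s + s) => V).filter
        (fun v => ∀ i, ∃ j, j ≠ i ∧ v i - v j ∈ Δ) with hPdef
    have hsub : {v : Fin (s + s) → AlgebraicClosure K |
        (∀ i, v i ∈ V) ∧ ∃ g : RatFunc (AlgebraicClosure K), Pvf s F v = g ^ n} ⊆ ↑P := by
      rintro v ⟨hvV, g, hg⟩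
      rw [Finset.mem_coe, hPdef, Finset.mem_filter]
      exact ⟨Fintype.mem_piFinset.2 hvV, fun i => partner hF hn0 hg hw₀ i⟩
    have h1 : Set.ncard {v : Fin (s + s) → AlgebraicClosure K |
        (∀ i, v i ∈ V) ∧ ∃ g : RatFunc (AlgebraicClosure K), Pvf s F v = g ^ n} ≤ P.card := by
      rw [← Set.ncard_coe_finset]
      exact Set.ncard_le_ncard hsub P.finite_toSet
    have h2 : P.card ≤ (s + s) ^ (s + s) * Δ.card ^ (s + s) * V.card ^ s :=
      count_main s hs Δ V hV
    have hΔcard : Δ.card ≤ (2 * d) * (2 * d) := by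
      have hW : (Wset F).card ≤ d + d := Wset_card_le hf0 hdeg
      have hW2 : (Wset F).card ≤ 2 * d := by rw [two_mul]; exact hW
      calc Δ.card ≤ (Wset F).card * (Wset F).card := Finset.card_image₂_le _ _ _
        _ ≤ (2 * d) * (2 * d) := Nat.mul_le_mul hW2 hW2
    have h3 : P.card ≤ Cnat * V.card ^ s := by
      calc P.card ≤ (s + s) ^ (s + s) * Δ.card ^ (s + s) * V.card ^ s := h2
        _ ≤ Cnat * V.card ^ s := by
            apply Nat.mul_le_mul_right
            rw [hCnat]
            exact Nat.mul_le_mul_left _ (Nat.pow_le_pow_left hΔcard _)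
    have h4 : Set.ncard {v : Fin (s + s) → AlgebraicClosure K |
        (∀ i, v i ∈ V) ∧ ∃ g : RatFunc (AlgebraicClosure K), Pvf s F v = g ^ n}
          ≤ Cnat * V.card ^ s := le_trans h1 h3
    calc (Set.ncard {v : Fin (s + s) → AlgebraicClosure K |
          (∀ i, v i ∈ V) ∧ ∃ g : RatFunc (AlgebraicClosure K), Pvf s F v = g ^ n} : ℝ)
        ≤ ((Cnat * V.card ^ s : ℕ) : ℝ) := by exact_mod_cast h4
      _ = (Cnat : ℝ) * (V.card : ℝ) ^ s := by push_cast; ring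

end RestrictedCoords
end
end

section
/- Fix integers d ≥ 1 and s ≥ 1. There exists a constant C > 0, depending only on d and s, such that the following holds for every prime p, every power q of p and every integer r ≥ 1. Let f(X) ∈ F_{q^r}(X) be a rational function of degree at most d which has at least one finite pole whose order is not a multiple of p. Then for every finite set V ⊆ closure(F_p) of cardinality V_0, the number of vectors v = (v_1, …, v_{2s}) ∈ V^{2s} such that L_{v,f} belongs to E is at most C · V_0^s. -/
open Polynomial

open scoped Classical

noncomputable section

namespace RestrictedCoords

variable {K L : Type*} [Field K] [Field L]

/- ===================== Auxiliary development ===================== -/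

open scoped nonZeroDivisors

section ShiftHom

variable {F : Type*} [Field F]

lemma comp_linear_inv (t : F) (q : F[X]) :
    (q.comp (X + C t)).comp (X - C t) = q := by
  rw [Polynomial.comp_assoc]
  simp [Polynomial.add_comp]

lemma comp_linear_ne_zero (t : F) {q : F[X]} (hq : q ≠ 0) : q.comp (X + C t) ≠ 0 := by
  intro h
  apply hq
  rw [← comp_linear_inv t q, h, Polynomial.zero_comp]

lemma shiftPolyHom_apply (t : F) (q : F[X]) :
    (Polynomial.eval₂RingHom (Polynomial.C : F →+* F[X]) (X + C t)) q = q.comp (X + C t) := by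
  rw [Polynomial.coe_eval₂RingHom]
  rfl

lemma shift_hle (t : F) :
    F[X]⁰ ≤ F[X]⁰.comap (Polynomial.eval₂RingHom (Polynomial.C : F →+* F[X]) (X + C t)) := by
  intro q hq
  rw [Submonoid.mem_comap]
  rw [mem_nonZeroDivisors_iff_ne_zero] at hq ⊢
  rw [shiftPolyHom_apply]
  exact comp_linear_ne_zero t hq

/-- The substitution `X ↦ X + t` as a ring homomorphism of rational functions. -/
noncomputable def shiftHom (t : F) : RatFunc F →+* RatFunc F :=
  RatFunc.mapRingHom (Polynomial.eval₂RingHom (Polynomial.C : F →+* F[X]) (X + C t))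
    (shift_hle t)

lemma shiftHom_div (t : F) (a b : F[X]) :
    shiftHom t (algebraMap F[X] (RatFunc F) a / algebraMap F[X] (RatFunc F) b) =
      algebraMap F[X] (RatFunc F) (a.comp (X + C t)) /
        algebraMap F[X] (RatFunc F) (b.comp (X + C t)) := by
  have h := RatFunc.map_apply_div
    (Polynomial.eval₂RingHom (Polynomial.C : F →+* F[X]) (X + C t)) (shift_hle t) a b
  rw [shiftPolyHom_apply, shiftPolyHom_apply] at h
  exact h

lemma shift_eq_shiftHom (t : F) (f : RatFunc F) : shift t f = shiftHom t f := by
  have h1 : shiftHom t f = shiftHom t (algebraMap F[X] (RatFunc F) f.num /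
      algebraMap F[X] (RatFunc F) f.denom) := by rw [RatFunc.num_div_denom]
  rw [h1, shiftHom_div]
  rfl

lemma comp_comp_linear (t a : F) (q : F[X]) :
    (q.comp (X + C a)).comp (X + C t) = q.comp (X + C (t + a)) := by
  rw [Polynomial.comp_assoc]
  congr 1
  simp [Polynomial.add_comp]
  ring

lemma shiftHom_shift (t a : F) (f : RatFunc F) :
    shiftHom t (shift a f) = shift (t + a) f := by
  have h1 : shift a f = algebraMap F[X] (RatFunc F) (f.num.comp (X + C a)) /
      algebraMap F[X] (RatFunc F) (f.denom.comp (X + C a)) := rfl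
  rw [h1, shiftHom_div, comp_comp_linear, comp_comp_linear]
  rfl

lemma shiftHom_C (t α : F) : shiftHom t (RatFunc.C α) = RatFunc.C α := by
  have h1 : RatFunc.C α = algebraMap F[X] (RatFunc F) (C α) / algebraMap F[X] (RatFunc F) 1 := by
    rw [map_one, div_one, RatFunc.algebraMap_C]
  rw [h1, shiftHom_div, Polynomial.C_comp, Polynomial.one_comp, map_one, div_one,
    RatFunc.algebraMap_C]


lemma shiftHom_X (t : F) : shiftHom t RatFunc.X = RatFunc.X + RatFunc.C t := by
  have h1 : (RatFunc.X : RatFunc F) = algebraMap F[X] (RatFunc F) X /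
      algebraMap F[X] (RatFunc F) 1 := by
    rw [map_one, div_one, RatFunc.algebraMap_X]
  rw [h1, shiftHom_div, Polynomial.X_comp, Polynomial.one_comp, map_one, div_one, map_add,
    RatFunc.algebraMap_X, RatFunc.algebraMap_C]
  simp

end ShiftHom

section Laurent

variable {F : Type*} [Field F]

lemma coeff_algebraMapLS_neg (q : F[X]) {n : ℤ} (hn : n < 0) :
    (algebraMap F[X] (LaurentSeries F) q).coeff n = 0 := by
  rw [Polynomial.algebraMap_hahnSeries_apply, HahnSeries.ofPowerSeries_apply]
  apply HahnSeries.embDomain_notin_range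
  rintro ⟨k, hk⟩
  simp at hk
  omega

lemma coeff_algebraMapLS_nat (q : F[X]) (k : ℕ) :
    (algebraMap F[X] (LaurentSeries F) q).coeff (k : ℤ) = q.coeff k := by
  rw [Polynomial.algebraMap_hahnSeries_apply, HahnSeries.ofPowerSeries_apply_coeff,
    Polynomial.coeff_coe]

lemma algebraMapLS_ne_zero {q : F[X]} (hq : q ≠ 0) :
    algebraMap F[X] (LaurentSeries F) q ≠ 0 := by
  intro h
  exact hq (Polynomial.algebraMap_hahnSeries_injective _ (by rw [h, map_zero]))

lemma order_algebraMapLS_nonneg {q : F[X]} (hq : q ≠ 0) :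
    0 ≤ (algebraMap F[X] (LaurentSeries F) q).order := by
  by_contra h
  push_neg at h
  exact (mt HahnSeries.coeff_order_eq_zero.mp (algebraMapLS_ne_zero hq)) (coeff_algebraMapLS_neg q h)

lemma order_algebraMapLS_eq_zero {q : F[X]} (h0 : q.coeff 0 ≠ 0) :
    (algebraMap F[X] (LaurentSeries F) q).order = 0 := by
  have hq : q ≠ 0 := fun h => h0 (by simp [h])
  refine le_antisymm ?_ (order_algebraMapLS_nonneg hq)
  apply HahnSeries.order_le_of_coeff_ne_zero
  rw [show (0 : ℤ) = ((0 : ℕ) : ℤ) from rfl, coeff_algebraMapLS_nat]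
  exact h0

lemma order_algebraMapLS_X :
    (algebraMap F[X] (LaurentSeries F) X).order = 1 := by
  rw [Polynomial.algebraMap_hahnSeries_apply, Polynomial.coe_X, HahnSeries.ofPowerSeries_X,
    HahnSeries.order_single one_ne_zero]

lemma LS_order_pow (x : LaurentSeries F) (hx : x ≠ 0) (n : ℕ) :
    (x ^ n).order = (n : ℤ) * x.order := by
  induction n with
  | zero => simp [HahnSeries.order_one]
  | succ n ih =>
    rw [pow_succ, HahnSeries.order_mul (pow_ne_zero n hx) hx, ih]
    push_cast
    ring

lemma LS_coeff_sum {ι : Type*} (s : Finset ι) (f : ι → LaurentSeries F) (n : ℤ) :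
    (∑ i ∈ s, f i).coeff n = ∑ i ∈ s, (f i).coeff n :=
  map_sum (AddMonoidHom.mk' (fun x : LaurentSeries F => x.coeff n)
    (fun _ _ => HahnSeries.coeff_add)) f s

lemma coe_ratFunc_algebraMap (q : F[X]) :
    ((algebraMap F[X] (RatFunc F) q : RatFunc F) : LaurentSeries F) =
      algebraMap F[X] (LaurentSeries F) q :=
  by simpa using RatFunc.algebraMap_apply_div q 1

lemma coe_ratFunc_C (α : F) :
    ((RatFunc.C α : RatFunc F) : LaurentSeries F) = HahnSeries.C α := by
  rw [← RatFunc.algebraMap_C, coe_ratFunc_algebraMap, Polynomial.algebraMap_hahnSeries_apply,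
    Polynomial.coe_C, HahnSeries.ofPowerSeries_C]

lemma coe_ratFunc_sum {ι : Type*} (s : Finset ι) (f : ι → RatFunc F) :
    ((∑ i ∈ s, f i : RatFunc F) : LaurentSeries F) = ∑ i ∈ s, ((f i : RatFunc F) : LaurentSeries F) :=
  by simp only [map_sum]

end Laurent
section PoleOrder

variable {F : Type*} [Field F]

lemma shift_mul_denom (u : F) (f : RatFunc F) :
    shift u f * algebraMap F[X] (RatFunc F) (f.denom.comp (X + C u)) =
      algebraMap F[X] (RatFunc F) (f.num.comp (X + C u)) := by
  have hd : algebraMap F[X] (RatFunc F) (f.denom.comp (X + C u)) ≠ 0 := by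
    intro h
    exact comp_linear_ne_zero u (RatFunc.denom_ne_zero f)
      ((map_eq_zero_iff _ (IsFractionRing.injective F[X] (RatFunc F))).mp h)
  exact div_mul_cancel₀ _ hd

lemma coe_shift_mul (u : F) (f : RatFunc F) :
    ((shift u f : RatFunc F) : LaurentSeries F) *
        algebraMap F[X] (LaurentSeries F) (f.denom.comp (X + C u)) =
      algebraMap F[X] (LaurentSeries F) (f.num.comp (X + C u)) := by
  have h := congrArg (fun x : RatFunc F => (x : LaurentSeries F)) (shift_mul_denom u f)
  simpa [map_mul, coe_ratFunc_algebraMap] using h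

lemma coe_shift_ne_zero {f : RatFunc F} (hf : f ≠ 0) (u : F) :
    ((shift u f : RatFunc F) : LaurentSeries F) ≠ 0 := by
  intro h
  have hkey := coe_shift_mul u f
  rw [h, zero_mul] at hkey
  exact algebraMapLS_ne_zero (comp_linear_ne_zero u (RatFunc.num_ne_zero hf)) hkey.symm

lemma num_eval_ne_zero_of_pole {f : RatFunc F} {w : F} (hw : f.denom.eval w = 0) :
    f.num.eval w ≠ 0 := by
  obtain ⟨a, b, hab⟩ := RatFunc.isCoprime_num_denom f
  intro h
  have h1 := congrArg (Polynomial.eval w) hab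
  simp only [Polynomial.eval_add, Polynomial.eval_mul, h, hw, mul_zero, zero_add, add_zero,
    Polynomial.eval_one] at h1
  exact zero_ne_one h1

lemma denom_comp_eval_zero (u : F) (f : RatFunc F) :
    (f.denom.comp (X + C u)).eval 0 = f.denom.eval u := by
  rw [Polynomial.eval_comp]
  simp

lemma num_comp_eval_zero (u : F) (f : RatFunc F) :
    (f.num.comp (X + C u)).eval 0 = f.num.eval u := by
  rw [Polynomial.eval_comp]
  simp

lemma order_coe_shift_pole {f : RatFunc F} {w : F} (hw : f.denom.eval w = 0) :
    ((shift w f : RatFunc F) : LaurentSeries F).order =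
      -(f.denom.rootMultiplicity w : ℤ) := by
  have hf : f ≠ 0 := by
    intro h0
    rw [h0, RatFunc.denom_zero] at hw
    simp at hw
  set m := f.denom.rootMultiplicity w with hm
  obtain ⟨d₀, hd, hnd⟩ := f.denom.exists_eq_pow_rootMultiplicity_mul_and_not_dvd
    (RatFunc.denom_ne_zero f) w
  have hd0w : d₀.eval w ≠ 0 := fun h => hnd (Polynomial.dvd_iff_isRoot.mpr h)
  have hcompd : f.denom.comp (X + C w) = X ^ m * (d₀.comp (X + C w)) := by
    conv_lhs => rw [hd]
    rw [Polynomial.mul_comp, Polynomial.pow_comp, Polynomial.sub_comp]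
    simp
    left; rfl
  have hd₀ne : d₀.comp (X + C w) ≠ 0 := by
    intro h
    apply hd0w
    have := congrArg (Polynomial.eval 0) h
    rwa [Polynomial.eval_comp, Polynomial.eval_zero, Polynomial.eval_add, Polynomial.eval_X,
      Polynomial.eval_C, zero_add] at this
  have hnum : f.num.eval w ≠ 0 := num_eval_ne_zero_of_pole hw
  have hnumcomp : f.num.comp (X + C w) ≠ 0 := comp_linear_ne_zero w (RatFunc.num_ne_zero hf)
  have hkey := coe_shift_mul w f
  have h1 := congrArg HahnSeries.order hkey
  rw [HahnSeries.order_mul (coe_shift_ne_zero hf w)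
    (algebraMapLS_ne_zero (comp_linear_ne_zero w (RatFunc.denom_ne_zero f)))] at h1
  have h2 : (algebraMap F[X] (LaurentSeries F) (f.num.comp (X + C w))).order = 0 := by
    apply order_algebraMapLS_eq_zero
    rw [Polynomial.coeff_zero_eq_eval_zero, num_comp_eval_zero]
    exact hnum
  have h3 : (algebraMap F[X] (LaurentSeries F) (f.denom.comp (X + C w))).order = (m : ℤ) := by
    rw [hcompd, map_mul, map_pow,
      HahnSeries.order_mul (pow_ne_zero m (algebraMapLS_ne_zero Polynomial.X_ne_zero))
        (algebraMapLS_ne_zero hd₀ne),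
      LS_order_pow _ (algebraMapLS_ne_zero Polynomial.X_ne_zero), order_algebraMapLS_X]
    have h4 : (algebraMap F[X] (LaurentSeries F) (d₀.comp (X + C w))).order = 0 := by
      apply order_algebraMapLS_eq_zero
      rw [Polynomial.coeff_zero_eq_eval_zero, Polynomial.eval_comp]
      simpa using hd0w
    rw [h4]
    ring
  rw [h2, h3] at h1
  omega

lemma coeff_coe_shift_nopole {f : RatFunc F} (hf : f ≠ 0) {u : F}
    (hu : f.denom.eval u ≠ 0) {n : ℤ} (hn : n < 0) :
    ((shift u f : RatFunc F) : LaurentSeries F).coeff n = 0 := by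
  have hdcomp : f.denom.comp (X + C u) ≠ 0 := comp_linear_ne_zero u (RatFunc.denom_ne_zero f)
  have hncomp : f.num.comp (X + C u) ≠ 0 := comp_linear_ne_zero u (RatFunc.num_ne_zero hf)
  have hkey := coe_shift_mul u f
  have h1 := congrArg HahnSeries.order hkey
  rw [HahnSeries.order_mul (coe_shift_ne_zero hf u) (algebraMapLS_ne_zero hdcomp)] at h1
  have h2 : (algebraMap F[X] (LaurentSeries F) (f.denom.comp (X + C u))).order = 0 := by
    apply order_algebraMapLS_eq_zero
    rwa [Polynomial.coeff_zero_eq_eval_zero, denom_comp_eval_zero]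
  have h3 := order_algebraMapLS_nonneg hncomp
  apply HahnSeries.coeff_eq_zero_of_lt_order
  omega

end PoleOrder

section FinHelpers

lemma fin_castAdd_or_addNat {s : ℕ} (i : Fin (s + s)) :
    (∃ j : Fin s, i = j.castAdd s) ∨ (∃ j : Fin s, i = j.addNat s) := by
  rcases lt_or_ge (i : ℕ) s with h | h
  · exact Or.inl ⟨⟨(i : ℕ), h⟩, by ext; simp⟩
  · refine Or.inr ⟨⟨(i : ℕ) - s, by omega⟩, ?_⟩
    ext
    simp
    omega

lemma fin_castAdd_ne_addNat {s : ℕ} (i j : Fin s) : (i.castAdd s : Fin (s + s)) ≠ j.addNat s := by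
  intro h
  have := congrArg Fin.val h
  simp at this
  omega

lemma fin_castAdd_inj {s : ℕ} {i j : Fin s} (h : (i.castAdd s : Fin (s + s)) = j.castAdd s) :
    i = j := by
  have := congrArg Fin.val h
  ext
  simpa using this

lemma fin_addNat_inj {s : ℕ} {i j : Fin s} (h : (i.addNat s : Fin (s + s)) = j.addNat s) :
    i = j := by
  have := congrArg Fin.val h
  ext
  simp at this
  omega

end FinHelpers
section Isolation

variable {F : Type*} [Field F]

lemma not_memE_of_isolated_pole {p : ℕ} (hp2 : 2 ≤ p) {f : RatFunc F} {w : F}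
    (hw : f.denom.eval w = 0) (hm : ¬ (p : ℤ) ∣ ordAt w f) {s : ℕ} (v : Fin (s + s) → F)
    (i₀ : Fin (s + s)) (hiso : ∀ j, j ≠ i₀ → f.denom.eval (w - v i₀ + v j) ≠ 0) :
    ¬ MemE p (Lvf s f v) := by
  intro hE
  obtain ⟨α, β, h, hG⟩ := hE
  have hf : f ≠ 0 := by
    intro h0
    rw [h0, RatFunc.denom_zero] at hw
    simp at hw
  set m := f.denom.rootMultiplicity w with hmdef
  have hm0 : 0 < m := (Polynomial.rootMultiplicity_pos (RatFunc.denom_ne_zero f)).mpr hw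
  have hnum0 : f.num.rootMultiplicity w = 0 :=
    Polynomial.rootMultiplicity_eq_zero (num_eval_ne_zero_of_pole hw)
  have hpm : ¬ (p : ℤ) ∣ (m : ℤ) := by
    intro hdvd
    apply hm
    have hord : ordAt w f = -(m : ℤ) := by
      unfold ordAt
      rw [hnum0]
      push_cast
      ring
    rw [hord]
    exact dvd_neg.mpr hdvd
  set t := w - v i₀ with ht
  set A : Fin (s + s) → LaurentSeries F :=
    fun j => ((shift (t + v j) f : RatFunc F) : LaurentSeries F) with hA
  have hti₀ : t + v i₀ = w := by rw [ht]; ring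
  have hA0ne : A i₀ ≠ 0 := by rw [hA]; exact coe_shift_ne_zero hf _
  have hA0ord : (A i₀).order = -(m : ℤ) := by
    rw [hA]
    simp only [hti₀]
    exact order_coe_shift_pole hw
  have f1 : (A i₀).coeff (-(m : ℤ)) ≠ 0 := by
    rw [← hA0ord]
    exact mt HahnSeries.coeff_order_eq_zero.mp hA0ne
  have f2 : ∀ n : ℤ, n < -(m : ℤ) → (A i₀).coeff n = 0 := by
    intro n hn
    exact HahnSeries.coeff_eq_zero_of_lt_order (by rw [hA0ord]; exact hn)
  have fo : ∀ j, j ≠ i₀ → ∀ n : ℤ, n < 0 → (A j).coeff n = 0 := by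
    intro j hj n hn
    exact coeff_coe_shift_nopole hf (hiso j hj) hn
  -- the Laurent expansion of the shifted Lvf
  set XT : LaurentSeries F := ((shiftHom t (Lvf s f v) : RatFunc F) : LaurentSeries F) with hXT
  have hXTsum : ∀ n : ℤ,
      XT.coeff n = ∑ i : Fin s, ((A (i.castAdd s)).coeff n - (A (i.addNat s)).coeff n) := by
    intro n
    have hs1 : shiftHom t (Lvf s f v) =
        ∑ i : Fin s, (shift (t + v (i.castAdd s)) f - shift (t + v (i.addNat s)) f) := by
      rw [Lvf, map_sum]
      refine Finset.sum_congr rfl fun i _ => ?_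
      rw [map_sub, shiftHom_shift, shiftHom_shift]
    rw [hXT, hs1, coe_ratFunc_sum, LS_coeff_sum]
    refine Finset.sum_congr rfl fun i _ => ?_
    rw [map_sub, HahnSeries.coeff_sub]
  have hcoeffzero : ∀ (j : Fin (s + s)) (n : ℤ), n < -(m : ℤ) → (A j).coeff n = 0 := by
    intro j n hn
    by_cases hj : j = i₀
    · rw [hj]; exact f2 n hn
    · exact fo j hj n (by omega)
  have h2 : ∀ n : ℤ, n < -(m : ℤ) → XT.coeff n = 0 := by
    intro n hn
    rw [hXTsum]
    apply Finset.sum_eq_zero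
    intro i _
    rw [hcoeffzero _ _ hn, hcoeffzero _ _ hn, sub_zero]
  have hmneg : -(m : ℤ) < 0 := by omega
  have h1 : XT.coeff (-(m : ℤ)) ≠ 0 := by
    rcases fin_castAdd_or_addNat i₀ with ⟨i₁, rfl⟩ | ⟨i₁, rfl⟩
    · rw [hXTsum]
      rw [Finset.sum_eq_single_of_mem i₁ (Finset.mem_univ i₁) (fun b _ hb => by
        rw [fo _ (fun hc => hb (fin_castAdd_inj hc)) _ hmneg,
          fo _ (Ne.symm (fin_castAdd_ne_addNat i₁ b)) _ hmneg, sub_zero])]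
      rw [fo _ (Ne.symm (fin_castAdd_ne_addNat i₁ i₁)) _ hmneg, sub_zero]
      exact f1
    · rw [hXTsum]
      rw [Finset.sum_eq_single_of_mem i₁ (Finset.mem_univ i₁) (fun b _ hb => by
        rw [fo _ (fin_castAdd_ne_addNat b i₁) _ hmneg,
          fo _ (fun hc => hb (fin_addNat_inj hc)) _ hmneg, sub_zero])]
      rw [fo _ (fin_castAdd_ne_addNat i₁ i₁) _ hmneg, zero_sub]
      exact neg_ne_zero.mpr f1
  -- now use the explicit form of Lvf as an element of E
  set Ah : LaurentSeries F := ((shiftHom t h : RatFunc F) : LaurentSeries F) with hAh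
  set Q : LaurentSeries F :=
    HahnSeries.C β * (HahnSeries.single 1 1 + HahnSeries.C t) with hQ
  have hXTE : XT = HahnSeries.C α * (Ah ^ p - Ah) + Q := by
    have hsh : shiftHom t (Lvf s f v) =
        RatFunc.C α * ((shiftHom t h) ^ p - shiftHom t h) +
          RatFunc.C β * (RatFunc.X + RatFunc.C t) := by
      rw [hG, map_add, map_mul, map_mul, map_sub, map_pow, shiftHom_C, shiftHom_C, shiftHom_X]
    rw [hXT, hsh]
    simp only [map_add, map_mul, map_sub, map_pow,
      coe_ratFunc_C, RatFunc.coe_X]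
    rfl
  have hQcoeff : ∀ n : ℤ, n < 0 → Q.coeff n = 0 := by
    intro n hn
    rw [hQ, HahnSeries.C_mul_eq_smul, HahnSeries.coeff_smul, HahnSeries.coeff_add,
      HahnSeries.C_apply, HahnSeries.coeff_single, HahnSeries.coeff_single]
    rw [if_neg (by omega), if_neg (by omega)]
    simp
  have hXTcoeff : ∀ n : ℤ, XT.coeff n = α * ((Ah ^ p).coeff n - Ah.coeff n) + Q.coeff n := by
    intro n
    rw [hXTE, HahnSeries.coeff_add, HahnSeries.C_mul_eq_smul, HahnSeries.coeff_smul,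
      HahnSeries.coeff_sub, smul_eq_mul]
  have e1 : α * ((Ah ^ p).coeff (-(m : ℤ)) - Ah.coeff (-(m : ℤ))) ≠ 0 := by
    intro h0
    apply h1
    rw [hXTcoeff, h0, hQcoeff _ hmneg, add_zero]
  have hα : α ≠ 0 := fun h0 => e1 (by rw [h0, zero_mul])
  have hAhne : Ah ≠ 0 := by
    intro h0
    apply e1
    rw [h0, zero_pow (by omega : p ≠ 0)]
    simp
  have hAppow : Ah ^ p ≠ 0 := pow_ne_zero _ hAhne
  have hordpow : (Ah ^ p).order = (p : ℤ) * Ah.order := LS_order_pow Ah hAhne p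
  have hp2' : (2 : ℤ) ≤ (p : ℤ) := by exact_mod_cast hp2
  rcases le_or_gt 0 Ah.order with hord | hord
  · apply e1
    have c1 : Ah.coeff (-(m : ℤ)) = 0 := HahnSeries.coeff_eq_zero_of_lt_order (by omega)
    have c2 : (Ah ^ p).coeff (-(m : ℤ)) = 0 := by
      apply HahnSeries.coeff_eq_zero_of_lt_order
      rw [hordpow]
      have hnn : 0 ≤ (p : ℤ) * Ah.order := mul_nonneg (by linarith) hord
      linarith
    rw [c1, c2]
    ring
  · have hpon : (p : ℤ) * Ah.order < Ah.order := by
      have h1 : (p : ℤ) * Ah.order ≤ 2 * Ah.order :=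
        mul_le_mul_of_nonpos_right hp2' (le_of_lt hord)
      linarith
    have cpo : XT.coeff ((p : ℤ) * Ah.order) ≠ 0 := by
      rw [hXTcoeff, hQcoeff _ (by linarith), add_zero]
      have cA : Ah.coeff ((p : ℤ) * Ah.order) = 0 :=
        HahnSeries.coeff_eq_zero_of_lt_order hpon
      have cAp : (Ah ^ p).coeff ((p : ℤ) * Ah.order) ≠ 0 := by
        rw [← hordpow]
        exact mt HahnSeries.coeff_order_eq_zero.mp hAppow
      rw [cA, sub_zero]
      exact mul_ne_zero hα cAp
    have hge : -(m : ℤ) ≤ (p : ℤ) * Ah.order := by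
      by_contra hlt
      push_neg at hlt
      exact cpo (h2 _ hlt)
    rcases eq_or_lt_of_le hge with heq | hlt
    · refine hpm ⟨-Ah.order, ?_⟩
      rw [mul_neg]
      linarith
    · apply e1
      have c1 : Ah.coeff (-(m : ℤ)) = 0 :=
        HahnSeries.coeff_eq_zero_of_lt_order (by linarith)
      have c2 : (Ah ^ p).coeff (-(m : ℤ)) = 0 :=
        HahnSeries.coeff_eq_zero_of_lt_order (by rw [hordpow]; exact hlt)
      rw [c1, c2]
      ring

end Isolation
section FPF

variable {N : ℕ} (n : Fin N → Fin N)

lemma ob_trans {a b c : Fin N} (h1 : ∃ k, n^[k] a = b) (h2 : ∃ l, n^[l] b = c) :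
    ∃ k, n^[k] a = c := by
  obtain ⟨k, rfl⟩ := h1
  obtain ⟨l, rfl⟩ := h2
  exact ⟨l + k, (Function.iterate_add_apply n l k a)⟩

lemma per_iterate {a : Fin N} (hper : ∃ k, 0 < k ∧ n^[k] a = a) (j : ℕ) :
    ∃ k, 0 < k ∧ n^[k] (n^[j] a) = n^[j] a := by
  obtain ⟨k, hk, ha⟩ := hper
  refine ⟨k, hk, ?_⟩
  rw [← Function.iterate_add_apply, add_comm, Function.iterate_add_apply, ha]

lemma ob_symm_of_per {a b : Fin N} (hper : ∃ k, 0 < k ∧ n^[k] a = a)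
    (hob : ∃ j, n^[j] a = b) : ∃ l, n^[l] b = a := by
  obtain ⟨k, hk, hka⟩ := hper
  obtain ⟨j, rfl⟩ := hob
  have hmult : ∀ i, n^[k * i] a = a := by
    intro i
    induction i with
    | zero => simp
    | succ i ih =>
      rw [Nat.mul_succ, Function.iterate_add_apply, hka, ih]
  have hle : j ≤ k * (j + 1) := by
    have h1 : 1 * (j + 1) ≤ k * (j + 1) := Nat.mul_le_mul_right _ hk
    omega
  refine ⟨k * (j + 1) - j, ?_⟩
  rw [← Function.iterate_add_apply, show k * (j + 1) - j + j = k * (j + 1) by omega]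
  exact hmult (j + 1)

lemma exists_periodic_iterate (hN : 0 < N) (a : Fin N) :
    ∃ j, ∃ k, 0 < k ∧ n^[k] (n^[j] a) = n^[j] a := by
  have hcard : Fintype.card (Fin N) < Fintype.card (Fin (N + 1)) := by
    simp
  obtain ⟨l, l', hne, heq⟩ :=
    Fintype.exists_ne_map_eq_of_card_lt (fun l : Fin (N + 1) => n^[(l : ℕ)] a) hcard
  have hvne : (l : ℕ) ≠ (l' : ℕ) := fun hv => hne (Fin.ext hv)
  rcases Nat.lt_or_ge (l : ℕ) (l' : ℕ) with hlt | hge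
  · refine ⟨(l : ℕ), (l' : ℕ) - (l : ℕ), by omega, ?_⟩
    rw [← Function.iterate_add_apply, show (l' : ℕ) - (l : ℕ) + (l : ℕ) = (l' : ℕ) by omega]
    exact heq.symm
  · have hlt : (l' : ℕ) < (l : ℕ) := by omega
    refine ⟨(l' : ℕ), (l : ℕ) - (l' : ℕ), by omega, ?_⟩
    rw [← Function.iterate_add_apply, show (l : ℕ) - (l' : ℕ) + (l' : ℕ) = (l : ℕ) by omega]
    exact heq

/-- The set of minimal representatives of cycles of `n`. -/
noncomputable def Rset : Finset (Fin N) :=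
  Finset.univ.filter (fun a : Fin N =>
    (∃ k, 0 < k ∧ n^[k] a = a) ∧ ∀ b : Fin N, (∃ l, n^[l] a = b) → a ≤ b)

lemma exists_rep {b : Fin N} (hb : ∃ k, 0 < k ∧ n^[k] b = b) :
    ∃ r ∈ Rset n, ∃ l, n^[l] r = b := by
  classical
  set O : Finset (Fin N) := Finset.univ.filter (fun c => ∃ l, n^[l] b = c) with hO
  have hbO : b ∈ O := by simp [hO]; exact ⟨0, rfl⟩
  set r := O.min' ⟨b, hbO⟩ with hr
  have hrO : r ∈ O := O.min'_mem _
  obtain ⟨l₀, hl₀⟩ : ∃ l, n^[l] b = r := by simpa [hO] using hrO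
  have hper_r : ∃ k, 0 < k ∧ n^[k] r = r := by
    rw [← hl₀]
    exact per_iterate n hb l₀
  refine ⟨r, ?_, ob_symm_of_per n hb ⟨l₀, hl₀⟩⟩
  simp only [Rset, Finset.mem_filter, Finset.mem_univ, true_and]
  refine ⟨hper_r, fun c hc => O.min'_le c ?_⟩
  simp only [hO, Finset.mem_filter, Finset.mem_univ, true_and]
  exact ob_trans n ⟨l₀, hl₀⟩ hc

lemma card_Rset_two (hn : ∀ i, n i ≠ i) : (Rset n).card * 2 ≤ N := by
  classical
  have hmem : ∀ r ∈ Rset n,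
      (∃ k, 0 < k ∧ n^[k] r = r) ∧ ∀ b : Fin N, (∃ l, n^[l] r = b) → r ≤ b := by
    intro r hr
    simpa [Rset] using hr
  have hdisj : ∀ r ∈ Rset n, ∀ r' ∈ Rset n, r ≠ r' →
      Disjoint ({r, n r} : Finset (Fin N)) {r', n r'} := by
    intro r hr r' hr' hne
    rw [Finset.disjoint_left]
    intro x hx hx'
    obtain ⟨hper_r, hmin_r⟩ := hmem r hr
    obtain ⟨hper_r', hmin_r'⟩ := hmem r' hr'
    have obrx : ∃ l, n^[l] r = x := by
      rcases Finset.mem_insert.mp hx with rfl | hx1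
      · exact ⟨0, rfl⟩
      · exact ⟨1, by simpa using (Finset.mem_singleton.mp hx1).symm⟩
    have obr'x : ∃ l, n^[l] r' = x := by
      rcases Finset.mem_insert.mp hx' with rfl | hx1
      · exact ⟨0, rfl⟩
      · exact ⟨1, by simpa using (Finset.mem_singleton.mp hx1).symm⟩
    have obxr : ∃ l, n^[l] x = r := ob_symm_of_per n hper_r obrx
    have obxr' : ∃ l, n^[l] x = r' := ob_symm_of_per n hper_r' obr'x
    have h1 : r ≤ r' := hmin_r r' (ob_trans n obrx obxr')
    have h2 : r' ≤ r := hmin_r' r (ob_trans n obr'x obxr)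
    exact hne (le_antisymm h1 h2)
  have hcard2 : ∀ r ∈ Rset n, ({r, n r} : Finset (Fin N)).card = 2 := by
    intro r hr
    have hne : r ∉ ({n r} : Finset (Fin N)) := by
      simp only [Finset.mem_singleton]
      exact fun hh => hn r hh.symm
    rw [Finset.card_insert_of_notMem hne, Finset.card_singleton]
  have hB : ((Rset n).biUnion (fun r => ({r, n r} : Finset (Fin N)))).card =
      ∑ r ∈ Rset n, ({r, n r} : Finset (Fin N)).card := Finset.card_biUnion hdisj
  have hsum : ∑ r ∈ Rset n, ({r, n r} : Finset (Fin N)).card = (Rset n).card * 2 := by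
    rw [Finset.sum_congr rfl hcard2, Finset.sum_const, smul_eq_mul]
  have hle : ((Rset n).biUnion (fun r => ({r, n r} : Finset (Fin N)))).card ≤ N := by
    have := Finset.card_le_card (Finset.subset_univ
      ((Rset n).biUnion (fun r => ({r, n r} : Finset (Fin N)))))
    simpa using this
  omega

end FPF

section Counting

variable {M : Type*} [AddCommGroup M]

lemma card_T_le (N : ℕ) (hN : 0 < N) (n : Fin N → Fin N) (δ : Fin N → M) (V : Finset M) :
    ((Fintype.piFinset fun _ : Fin N => V).filter
        (fun v : Fin N → M => ∀ i, v i = v (n i) + δ i)).card ≤ V.card ^ (Rset n).card := by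
  classical
  set R := Rset n with hR
  set T := ((Fintype.piFinset fun _ : Fin N => V).filter
    (fun v : Fin N → M => ∀ i, v i = v (n i) + δ i)) with hT
  set enc : (Fin N → M) → (Fin N → M) := fun v i => if i ∈ R then v i else 0 with henc
  have hmaps : ∀ v ∈ T, enc v ∈ Fintype.piFinset (fun i : Fin N => if i ∈ R then V else {0}) := by
    intro v hv
    rw [Fintype.mem_piFinset]
    intro i
    rw [henc]
    by_cases hi : i ∈ R
    · simp only [hi, if_true]
      rw [hT, Finset.mem_filter, Fintype.mem_piFinset] at hv
      exact hv.1 i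
    · simp [hi]
  have hinj : Set.InjOn enc ↑T := by
    intro v hv v' hv' heq
    have hv1 := Finset.mem_filter.mp (Finset.mem_coe.mp hv)
    have hv'1 := Finset.mem_filter.mp (Finset.mem_coe.mp hv')
    have hrel : ∀ a : Fin N, v a - v' a = v (n a) - v' (n a) := by
      intro a
      rw [hv1.2 a, hv'1.2 a]
      abel
    have hit : ∀ (k : ℕ) (a : Fin N), v a - v' a = v (n^[k] a) - v' (n^[k] a) := by
      intro k
      induction k with
      | zero => intro a; rfl
      | succ k ih =>
        intro a
        rw [Function.iterate_succ_apply, ← ih (n a), hrel]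
    have hRval : ∀ r ∈ R, v r = v' r := by
      intro r hr
      have h0 : enc v r = enc v' r := congrFun heq r
      rw [henc] at h0
      simp only [if_pos hr] at h0
      exact h0
    funext a
    obtain ⟨j, k, hk, hper⟩ := exists_periodic_iterate n hN a
    obtain ⟨r, hrR, l, hl⟩ := exists_rep n ⟨k, hk, hper⟩
    have h1 : v a - v' a = v (n^[j] a) - v' (n^[j] a) := hit j a
    have h2 : v r - v' r = v (n^[j] a) - v' (n^[j] a) := by
      rw [← hl]
      exact hit l r
    have h3 : v r = v' r := hRval r hrR
    have : v a - v' a = 0 := by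
      rw [h1, ← h2, h3, sub_self]
    exact sub_eq_zero.mp this
  have hcardle := Finset.card_le_card_of_injOn enc hmaps hinj
  refine le_trans hcardle ?_
  rw [Fintype.card_piFinset]
  have hprod : ∀ i : Fin N, (if i ∈ R then V else ({0} : Finset M)).card =
      if i ∈ R then V.card else 1 := by
    intro i
    by_cases hi : i ∈ R <;> simp [hi]
  rw [Finset.prod_congr rfl (fun i _ => hprod i)]
  rw [Finset.prod_ite_mem Finset.univ R (fun _ => V.card)]
  simp only [Finset.univ_inter, Finset.prod_const]
  exact le_refl _

lemma counting (s : ℕ) (hs : 1 ≤ s) (Δ V : Finset M) :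
    Set.ncard {v : Fin (s + s) → M | (∀ i, v i ∈ V) ∧ ∀ i, ∃ j, j ≠ i ∧ v i - v j ∈ Δ} ≤
      (s + s) ^ (s + s) * Δ.card ^ (s + s) * V.card ^ s := by
  classical
  have hN : 0 < s + s := by omega
  set 𝒜 : Finset ((Fin (s + s) → Fin (s + s)) × (Fin (s + s) → M)) :=
    (Finset.univ.filter fun n : Fin (s + s) → Fin (s + s) => ∀ i, n i ≠ i) ×ˢ Fintype.piFinset (fun _ : Fin (s + s) => Δ)
    with h𝒜
  set T : (Fin (s + s) → Fin (s + s)) × (Fin (s + s) → M) → Finset (Fin (s + s) → M) := fun nd =>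
    (Fintype.piFinset fun _ : Fin (s + s) => V).filter
      (fun v : Fin (s + s) → M => ∀ i, v i = v (nd.1 i) + nd.2 i) with hTdef
  have hsub : {v : Fin (s + s) → M | (∀ i, v i ∈ V) ∧ ∀ i, ∃ j, j ≠ i ∧ v i - v j ∈ Δ} ⊆
      ↑(𝒜.biUnion T) := by
    rintro v ⟨hvV, hcov⟩
    choose jf hjf hΔf using hcov
    refine Finset.mem_coe.mpr (Finset.mem_biUnion.mpr
      ⟨(jf, fun i => v i - v (jf i)), ?_, ?_⟩)
    · rw [h𝒜, Finset.mem_product]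
      constructor
      · rw [Finset.mem_filter]
        exact ⟨Finset.mem_univ _, hjf⟩
      · rw [Fintype.mem_piFinset]
        exact hΔf
    · rw [hTdef, Finset.mem_filter, Fintype.mem_piFinset]
      refine ⟨hvV, fun i => ?_⟩
      exact eq_add_of_sub_eq (sub_sub_cancel _ _)
  refine le_trans (Set.ncard_le_ncard hsub (𝒜.biUnion T).finite_toSet) ?_
  rw [Set.ncard_coe_finset]
  refine le_trans Finset.card_biUnion_le ?_
  have hTbound : ∀ nd ∈ 𝒜, (T nd).card ≤ V.card ^ s := by
    rintro ⟨n, δ⟩ hnd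
    have hn : ∀ i, n i ≠ i := by
      rw [h𝒜, Finset.mem_product, Finset.mem_filter] at hnd
      exact hnd.1.2
    rcases Nat.eq_zero_or_pos V.card with hV0 | hV1
    · have hempty : (Fintype.piFinset fun _ : Fin (s + s) => V).card = 0 := by
        rw [Fintype.card_piFinset]
        simp only [Finset.prod_const, hV0, Finset.card_univ, Fintype.card_fin]
        exact zero_pow (by omega)
      have hle0 := Finset.card_le_card (Finset.filter_subset
        (fun v : Fin (s + s) → M => ∀ i, v i = v (n i) + δ i)
        (Fintype.piFinset fun _ : Fin (s + s) => V))
      rw [hempty] at hle0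
      simp only [hTdef]
      rw [hV0, zero_pow (Nat.one_le_iff_ne_zero.mp hs)]
      exact hle0
    · simp only [hTdef]
      refine le_trans (card_T_le (s + s) hN n δ V) ?_
      apply Nat.pow_le_pow_right hV1
      have := card_Rset_two n hn
      omega
  refine le_trans (Finset.sum_le_card_nsmul 𝒜 _ (V.card ^ s) hTbound) ?_
  rw [smul_eq_mul]
  have h𝒜card : 𝒜.card ≤ (s + s) ^ (s + s) * Δ.card ^ (s + s) := by
    rw [h𝒜, Finset.card_product]
    apply Nat.mul_le_mul
    · refine le_trans (Finset.card_le_card (Finset.filter_subset _ _)) ?_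
      rw [Finset.card_univ, Fintype.card_fun]
      simp
    · rw [Fintype.card_piFinset_const]
  exact Nat.mul_le_mul_right _ h𝒜card

end Counting
/-- Lemma 4.4 of the paper: for `f ∈ R_d`, the number of vectors `v ∈ V^{2s}`
for which `L_{v,f}` is exceptional is `O(V₀^s)`, uniformly in `p`, `q`, `r` and `V`. -/
theorem statement_5 (d s : ℕ) (hd : 1 ≤ d) (hs : 1 ≤ s) :
    ∃ C : ℝ, 0 < C ∧
      ∀ (p q a : ℕ), p.Prime → 0 < a → q = p ^ a →
      ∀ (r : ℕ), 1 ≤ r →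
      ∀ (K : Type) [Field K] [Fintype K], Fintype.card K = q ^ r →
      ∀ (f : RatFunc K), MemR p d f →
      ∀ (V : Finset (AlgebraicClosure K)),
        (Set.ncard {v : Fin (s + s) → AlgebraicClosure K |
            (∀ i, v i ∈ V) ∧
              MemE p (Lvf s (ratMap (algebraMap K (AlgebraicClosure K)) f) v)} : ℝ)
          ≤ C * (V.card : ℝ) ^ s := by
  classical
  refine ⟨(((s + s) ^ (s + s) * (d ^ 2) ^ (s + s) + 1 : ℕ) : ℝ),
    by exact_mod_cast Nat.succ_pos _, ?_⟩
  intro p q a hp ha hqpa r hr K _ _ hcard f hf V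
  obtain ⟨hdeg, w, hw, hord⟩ := hf
  set F : RatFunc (AlgebraicClosure K) := ratMap (algebraMap K (AlgebraicClosure K)) f with hF
  set P : Finset (AlgebraicClosure K) := F.denom.roots.toFinset with hP
  set Δ : Finset (AlgebraicClosure K) :=
    Finset.image (fun xy : AlgebraicClosure K × AlgebraicClosure K => xy.1 - xy.2) (P ×ˢ P)
    with hΔ
  have hwpole : F.denom.eval w = 0 := hw
  have hPmem : ∀ x, x ∈ P ↔ F.denom.eval x = 0 := by
    intro x
    rw [hP, Multiset.mem_toFinset, Polynomial.mem_roots (RatFunc.denom_ne_zero F)]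
    exact Iff.rfl
  have hsub : {v : Fin (s + s) → AlgebraicClosure K |
        (∀ i, v i ∈ V) ∧ MemE p (Lvf s F v)} ⊆
      {v : Fin (s + s) → AlgebraicClosure K |
        (∀ i, v i ∈ V) ∧ ∀ i, ∃ j, j ≠ i ∧ v i - v j ∈ Δ} := by
    rintro v ⟨hvV, hvE⟩
    refine ⟨hvV, fun i₀ => ?_⟩
    by_contra hcon
    push_neg at hcon
    refine not_memE_of_isolated_pole hp.two_le hwpole hord v i₀ (fun j hj heval => ?_) hvE
    refine hcon j hj ?_
    rw [hΔ, Finset.mem_image]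
    refine ⟨(w, w - v i₀ + v j),
      Finset.mem_product.mpr ⟨(hPmem w).mpr hwpole, (hPmem _).mpr heval⟩, ?_⟩
    show w - (w - v i₀ + v j) = v i₀ - v j
    ring
  have hΔcard : Δ.card ≤ d ^ 2 := by
    have h1 : Δ.card ≤ (P ×ˢ P).card := Finset.card_image_le
    rw [Finset.card_product] at h1
    have hPd : P.card ≤ d := by
      have h2 : P.card ≤ Multiset.card F.denom.roots := Multiset.toFinset_card_le _
      have h3 : Multiset.card F.denom.roots ≤ F.denom.natDegree := Polynomial.card_roots' _
      have h4 : F.denom.natDegree ≤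
          (f.denom.map (algebraMap K (AlgebraicClosure K))).natDegree := by
        apply Polynomial.natDegree_le_of_dvd
        · rw [hF]; exact RatFunc.denom_div_dvd _ _
        · exact Polynomial.map_ne_zero (RatFunc.denom_ne_zero f)
      have h5 : (f.denom.map (algebraMap K (AlgebraicClosure K))).natDegree =
          f.denom.natDegree := Polynomial.natDegree_map _
      have h6 : f.denom.natDegree ≤ d := le_trans (le_max_right _ _) hdeg
      omega
    nlinarith
  have hfin : ({v : Fin (s + s) → AlgebraicClosure K |
      (∀ i, v i ∈ V) ∧ ∀ i, ∃ j, j ≠ i ∧ v i - v j ∈ Δ}).Finite := by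
    apply Set.Finite.subset (Finset.finite_toSet (Fintype.piFinset fun _ : Fin (s + s) => V))
    intro v hv
    rw [Finset.mem_coe, Fintype.mem_piFinset]
    exact hv.1
  have hncard : Set.ncard {v : Fin (s + s) → AlgebraicClosure K |
        (∀ i, v i ∈ V) ∧ MemE p (Lvf s F v)} ≤
      (s + s) ^ (s + s) * Δ.card ^ (s + s) * V.card ^ s :=
    le_trans (Set.ncard_le_ncard hsub hfin) (counting s hs Δ V)
  have hnat : Set.ncard {v : Fin (s + s) → AlgebraicClosure K |
        (∀ i, v i ∈ V) ∧ MemE p (Lvf s F v)} ≤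
      ((s + s) ^ (s + s) * (d ^ 2) ^ (s + s) + 1) * V.card ^ s := by
    have hstep : (s + s) ^ (s + s) * Δ.card ^ (s + s) ≤
        (s + s) ^ (s + s) * (d ^ 2) ^ (s + s) :=
      Nat.mul_le_mul_left _ (Nat.pow_le_pow_left hΔcard _)
    have hstep2 : (s + s) ^ (s + s) * Δ.card ^ (s + s) * V.card ^ s ≤
        ((s + s) ^ (s + s) * (d ^ 2) ^ (s + s) + 1) * V.card ^ s :=
      Nat.mul_le_mul_right _ (le_trans hstep (Nat.le_succ _))
    exact le_trans hncard hstep2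
  calc (Set.ncard {v : Fin (s + s) → AlgebraicClosure K |
        (∀ i, v i ∈ V) ∧ MemE p (Lvf s F v)} : ℝ)
      ≤ ((((s + s) ^ (s + s) * (d ^ 2) ^ (s + s) + 1) * V.card ^ s : ℕ) : ℝ) :=
        Nat.cast_le.mpr hnat
    _ = (((s + s) ^ (s + s) * (d ^ 2) ^ (s + s) + 1 : ℕ) : ℝ) * (V.card : ℝ) ^ s := by
        push_cast
        ring

end RestrictedCoords
end
end

section
/- Fix integers s ≥ 1 and m ≥ 1. There exists a constant C > 0, depending only on s and m, such that for every abelian group G, every subset D ⊆ G with #D ≤ m, and every finite subset V ⊆ G of cardinality V_0, the number of vectors (v_1, …, v_{2s}) ∈ V^{2s} with the property that for every index i ∈ {1, …, 2s} there exists an index k ≠ i with v_i − v_k ∈ D, is at most C · V_0^s. -/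
open Polynomial

open scoped Classical

noncomputable section

namespace RestrictedCoords

variable {K L : Type*} [Field K] [Field L]

section CountingAux

open Pointwise

variable {G : Type} [AddCommGroup G]

private lemma card_nsmul_le' (A : Finset G) : ∀ n : ℕ, (n • A).card ≤ A.card ^ n := by
  intro n
  induction n with
  | zero => simp [zero_nsmul]
  | succ n ih =>
      rw [succ_nsmul]
      calc (n • A + A).card ≤ (n • A).card * A.card := Finset.card_add_le
        _ ≤ A.card ^ n * A.card := Nat.mul_le_mul_right _ ih
        _ = A.card ^ (n + 1) := (pow_succ _ _).symm

private lemma nsmul_subset_nsmul' (A : Finset G) (h0 : (0 : G) ∈ A) {n m : ℕ} (h : n ≤ m) :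
    n • A ⊆ m • A := by
  induction m, h using Nat.le_induction with
  | base => exact subset_rfl
  | succ m _ ih =>
      refine ih.trans fun x hx => ?_
      rw [succ_nsmul]
      simpa using Finset.add_mem_add hx h0

/-- The auxiliary graph on indices: `i` and `k` are adjacent if they differ by `D`. -/
private def grD (D : Finset G) {n : ℕ} (v : Fin n → G) : SimpleGraph (Fin n) :=
  SimpleGraph.fromRel fun i k => v i - v k ∈ D

/-- The minimum of the connected component of `i`. -/
private noncomputable def rhoD (D : Finset G) {n : ℕ} (v : Fin n → G) (i : Fin n) : Fin n :=
  (Finset.univ.filter fun k => (grD D v).Reachable i k).min'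
    ⟨i, Finset.mem_filter.mpr ⟨Finset.mem_univ i, SimpleGraph.Reachable.refl i⟩⟩

private lemma rhoD_reach (D : Finset G) {n : ℕ} (v : Fin n → G) (i : Fin n) :
    (grD D v).Reachable i (rhoD D v i) := by
  have := Finset.min'_mem (Finset.univ.filter fun k => (grD D v).Reachable i k)
    ⟨i, Finset.mem_filter.mpr ⟨Finset.mem_univ i, SimpleGraph.Reachable.refl i⟩⟩
  exact (Finset.mem_filter.mp this).2

private lemma rhoD_congr (D : Finset G) {n : ℕ} (v : Fin n → G) {i k : Fin n}
    (h : (grD D v).Reachable i k) : rhoD D v i = rhoD D v k := by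
  have hset : (Finset.univ.filter fun j => (grD D v).Reachable i j)
      = Finset.univ.filter fun j => (grD D v).Reachable k j := by
    ext j
    simp only [Finset.mem_filter, Finset.mem_univ, true_and]
    exact ⟨fun hj => h.symm.trans hj, fun hj => h.trans hj⟩
  simp only [rhoD, hset]

private lemma rhoD_idem (D : Finset G) {n : ℕ} (v : Fin n → G) (i : Fin n) :
    rhoD D v (rhoD D v i) = rhoD D v i :=
  (rhoD_congr D v (rhoD_reach D v i)).symm

end CountingAux

/-- The counting step common to the proofs of Lemmas 4.1 and 4.4 of the paper:
the number of vectors `v ∈ V^{2s}` each of whose components differs from some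
other component by an element of a set `D` of at most `m` elements is `O(V₀^s)`. -/
theorem statement_11 (s m : ℕ) (hs : 1 ≤ s) (hm : 1 ≤ m) :
    ∃ C : ℝ, 0 < C ∧
      ∀ (G : Type) [AddCommGroup G] (D : Finset G), D.card ≤ m →
      ∀ (V : Finset G),
        (Set.ncard {v : Fin (s + s) → G |
            (∀ i, v i ∈ V) ∧ ∀ i, ∃ k, k ≠ i ∧ v i - v k ∈ D} : ℝ)
          ≤ C * (V.card : ℝ) ^ s := by
  classical
  refine ⟨(((s + s) ^ (s + s) * ((2 * m + 1) ^ (s + s)) ^ (s + s) : ℕ) : ℝ), ?_, ?_⟩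
  · have h1 : 0 < (s + s) ^ (s + s) * ((2 * m + 1) ^ (s + s)) ^ (s + s) :=
      Nat.mul_pos (Nat.pow_pos (by omega))
        (Nat.pow_pos (Nat.pow_pos (by omega)))
    exact_mod_cast h1
  intro G _ D hD V
  set S := {v : Fin (s + s) → G |
      (∀ i, v i ∈ V) ∧ ∀ i, ∃ k, k ≠ i ∧ v i - v k ∈ D} with hSdef
  by_cases hVe : V = ∅
  · have hE : S = ∅ := by
      ext v
      simp only [hSdef, Set.mem_setOf_eq, Set.mem_empty_iff_false, iff_false, not_and]
      intro h1 _
      exact absurd (h1 ⟨0, by omega⟩) (by simp [hVe])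
    rw [hE]
    simp only [Set.ncard_empty, Nat.cast_zero]
    positivity
  obtain ⟨x0, hx0⟩ := Finset.nonempty_iff_ne_empty.mpr hVe
  open Pointwise in
  set A : Finset G := (D ∪ -D) ∪ {0} with hAdef
  have hA0 : (0 : G) ∈ A := by simp [hAdef]
  have hAcard : A.card ≤ 2 * m + 1 := by
    have h1 : (D ∪ -D).card ≤ 2 * m := by
      have := Finset.card_union_le D (-D)
      rw [Finset.card_neg] at this
      omega
    calc A.card ≤ (D ∪ -D).card + ({0} : Finset G).card := Finset.card_union_le _ _
      _ ≤ 2 * m + 1 := by rw [Finset.card_singleton]; omega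
  have hD'card : ((s + s) • A).card ≤ (2 * m + 1) ^ (s + s) :=
    (card_nsmul_le' A (s + s)).trans (Nat.pow_le_pow_left hAcard _)
  -- membership of differences along walks
  have htele : ∀ (v : Fin (s + s) → G) (i k : Fin (s + s)) (p : (grD D v).Walk i k),
      v i - v k ∈ p.length • A := by
    intro v i k p
    induction p with
    | nil => simp [zero_nsmul]
    | @cons a b c hadj p ih =>
        have hstep : v a - v b ∈ A := by
          rw [grD, SimpleGraph.fromRel_adj] at hadj
          rcases hadj.2 with h | h
          · exact Finset.mem_union_left _ (Finset.mem_union_left _ h)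
          · have he : v a - v b = -(v b - v a) := by abel
            rw [he]
            exact Finset.mem_union_left _ (Finset.mem_union_right _ (Finset.neg_mem_neg h))
        have he : v a - v c = (v b - v c) + (v a - v b) := by abel
        rw [SimpleGraph.Walk.length_cons, he, succ_nsmul]
        exact Finset.add_mem_add ih hstep
  have hdiff : ∀ (v : Fin (s + s) → G) (i : Fin (s + s)),
      v i - v (rhoD D v i) ∈ (s + s) • A := by
    intro v i
    obtain ⟨p⟩ := rhoD_reach D v i
    have hlen : p.bypass.length < s + s := by
      have := p.bypass_isPath.length_lt
      simpa using this
    exact nsmul_subset_nsmul' A hA0 hlen.le (htele v _ _ p.bypass)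
  -- the fixed-point set of rho has at most s elements
  have hrho_mem_fix : ∀ (v : Fin (s + s) → G) (i : Fin (s + s)),
      rhoD D v i ∈ Finset.univ.filter fun j => rhoD D v j = j := by
    intro v i
    exact Finset.mem_filter.mpr ⟨Finset.mem_univ _, rhoD_idem D v i⟩
  have hfix_card : ∀ v : Fin (s + s) → G, (∀ i, ∃ k, k ≠ i ∧ v i - v k ∈ D) →
      (Finset.univ.filter fun j => rhoD D v j = j).card ≤ s := by
    intro v hv
    set F := Finset.univ.filter fun j => rhoD D v j = j with hF
    have hsum : ∑ j ∈ F, (Finset.univ.filter fun i => rhoD D v i = j).card = s + s := by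
      rw [← Finset.card_eq_sum_card_fiberwise (fun i _ => hrho_mem_fix v i)]
      simp
    have h2 : ∀ j ∈ F, 2 ≤ (Finset.univ.filter fun i => rhoD D v i = j).card := by
      intro j hj
      obtain ⟨k, hk, hkD⟩ := hv j
      have hjfix : rhoD D v j = j := (Finset.mem_filter.mp hj).2
      have hadj : (grD D v).Adj j k := by
        rw [grD, SimpleGraph.fromRel_adj]
        exact ⟨hk.symm, Or.inl hkD⟩
      have hkj : rhoD D v k = j := by
        rw [rhoD_congr D v hadj.symm.reachable]
        exact hjfix
      have hsub : ({k, j} : Finset (Fin (s + s))) ⊆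
          Finset.univ.filter fun i => rhoD D v i = j := by
        intro x hx
        rcases Finset.mem_insert.mp hx with rfl | hx
        · exact Finset.mem_filter.mpr ⟨Finset.mem_univ _, hkj⟩
        · rw [Finset.mem_singleton] at hx
          subst hx
          exact Finset.mem_filter.mpr ⟨Finset.mem_univ _, hjfix⟩
      calc 2 = ({k, j} : Finset (Fin (s + s))).card := (Finset.card_pair hk).symm
        _ ≤ _ := Finset.card_le_card hsub
    have hle : 2 * F.card ≤ s + s := by
      calc 2 * F.card = ∑ _j ∈ F, 2 := by rw [Finset.sum_const, smul_eq_mul, mul_comm]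
        _ ≤ ∑ j ∈ F, (Finset.univ.filter fun i => rhoD D v i = j).card :=
            Finset.sum_le_sum h2
        _ = s + s := hsum
    omega
  -- the encoding map
  set i0 : Fin (s + s) := ⟨0, by omega⟩ with hi0
  set enc : (Fin (s + s) → G) → (Fin (s + s) → Fin (s + s)) × (Fin (s + s) → G) × (Fin s → G) :=
    fun v => (rhoD D v, fun i => v i - v (rhoD D v i),
      fun a => v (((Finset.univ.filter fun j => rhoD D v j = j).sort (· ≤ ·)).getD
        (a : ℕ) i0)) with hencdef
  set T := (Finset.univ : Finset (Fin (s + s) → Fin (s + s))) ×ˢ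
      ((Fintype.piFinset fun _ : Fin (s + s) => (s + s) • A) ×ˢ
        (Fintype.piFinset fun _ : Fin s => V)) with hTdef
  have hmaps : ∀ v ∈ S, enc v ∈ T := by
    intro v hv
    simp only [hTdef, Finset.mem_product, Finset.mem_univ, true_and, Fintype.mem_piFinset]
    exact ⟨fun i => hdiff v i, fun a => hv.1 _⟩
  have hinj : Set.InjOn enc S := by
    intro v hv w hw he
    have h1 : rhoD D v = rhoD D w := congrArg Prod.fst he
    have h2 : (fun i => v i - v (rhoD D v i)) = fun i => w i - w (rhoD D w i) :=
      congrArg (fun p => p.2.1) he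
    have h3 : _ = _ := congrArg (fun p => p.2.2) he
    have hfix : (Finset.univ.filter fun j => rhoD D v j = j)
        = Finset.univ.filter fun j => rhoD D w j = j := by
      ext x
      simp only [Finset.mem_filter, h1]
    have hval : ∀ j ∈ Finset.univ.filter fun j => rhoD D v j = j, v j = w j := by
      intro j hj
      set l := (Finset.univ.filter fun j => rhoD D v j = j).sort (· ≤ ·) with hl
      have hmem : j ∈ l := (Finset.mem_sort _).mpr hj
      have hidx : l.idxOf j < l.length := List.idxOf_lt_length_iff.mpr hmem
      have hlenle : l.length ≤ s := by
        rw [hl, Finset.length_sort]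
        exact hfix_card v hv.2
      have hidx' : l.idxOf j < s := lt_of_lt_of_le hidx hlenle
      have hthis := congrFun h3 ⟨l.idxOf j, hidx'⟩
      simp only [hencdef] at hthis
      rw [← hfix, ← hl] at hthis
      rwa [List.getD_eq_getElem l i0 hidx, List.getElem_idxOf hidx] at hthis
    funext i
    have hji : rhoD D v i ∈ Finset.univ.filter fun j => rhoD D v j = j := hrho_mem_fix v i
    have h2i := congrFun h2 i
    have hvr : v (rhoD D v i) = w (rhoD D w i) := by
      rw [← h1]
      exact hval _ hji
    calc v i = (v i - v (rhoD D v i)) + v (rhoD D v i) := by abel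
      _ = (w i - w (rhoD D w i)) + w (rhoD D w i) := by rw [h2i, hvr]
      _ = w i := by abel
  have hcount : S.ncard ≤ T.card := by
    have himg : enc '' S ⊆ ↑T := by
      rintro _ ⟨v, hv, rfl⟩
      exact hmaps v hv
    calc S.ncard = (enc '' S).ncard := (Set.ncard_image_of_injOn hinj).symm
      _ ≤ (↑T : Set _).ncard := Set.ncard_le_ncard himg T.finite_toSet
      _ = T.card := Set.ncard_coe_finset T
  have hT : T.card ≤ (s + s) ^ (s + s) * ((2 * m + 1) ^ (s + s)) ^ (s + s) * V.card ^ s := by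
    have hTc : T.card = (s + s) ^ (s + s) * (((s + s) • A).card ^ (s + s) * V.card ^ s) := by
      simp [hTdef, Finset.card_product, Fintype.card_piFinset, Finset.prod_const,
        Finset.card_univ, Fintype.card_fun, Fintype.card_fin]
    rw [hTc, mul_assoc]
    exact Nat.mul_le_mul_left _ (Nat.mul_le_mul_right _ (Nat.pow_le_pow_left hD'card _))
  calc (S.ncard : ℝ) ≤ (T.card : ℝ) := Nat.cast_le.mpr hcount
    _ ≤ (((s + s) ^ (s + s) * ((2 * m + 1) ^ (s + s)) ^ (s + s) * V.card ^ s : ℕ) : ℝ) :=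
        Nat.cast_le.mpr hT
    _ = _ := by push_cast; ring

end RestrictedCoords
end
end

section
/- Let p be a prime and s ≥ 1 an integer. Let f ∈ closure(F_p)(X) have a finite pole at α ∈ closure(F_p) whose order u is not divisible by p. Let v = (v_1, …, v_{2s}) ∈ closure(F_p)^{2s} and suppose there exists an index i ∈ {1, …, 2s} such that α − v_i ≠ α′ − v_j for every finite pole α′ of f and every index j ≠ i. Then L_{v,f} has a pole at β = α − v_i of order exactly u; in particular, since u is not divisible by p, L_{v,f} does not belong to E. -/
open Polynomial

open scoped Classical

noncomputable section

namespace RestrictedCoords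

variable {K L : Type*} [Field K] [Field L]

section OrdLemmas

variable {w : K}

lemma ordAt_zero (w : K) : ordAt w (0 : RatFunc K) = 0 := by
  simp [ordAt, RatFunc.num_zero, RatFunc.denom_zero]

lemma ne_zero_of_ordAt_ne_zero {w : K} {f : RatFunc K} (h : ordAt w f ≠ 0) : f ≠ 0 := by
  rintro rfl; exact h (ordAt_zero w)

lemma ordAt_div (w : K) {P Q : K[X]} (hP : P ≠ 0) (hQ : Q ≠ 0) :
    ordAt w (algebraMap K[X] (RatFunc K) P / algebraMap K[X] (RatFunc K) Q)
      = (P.rootMultiplicity w : ℤ) - Q.rootMultiplicity w := by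
  set f := algebraMap K[X] (RatFunc K) P / algebraMap K[X] (RatFunc K) Q with hf
  have hQ' : algebraMap K[X] (RatFunc K) Q ≠ 0 := RatFunc.algebraMap_ne_zero hQ
  have hP' : algebraMap K[X] (RatFunc K) P ≠ 0 := RatFunc.algebraMap_ne_zero hP
  have hfne : f ≠ 0 := div_ne_zero hP' hQ'
  have hnum : f.num ≠ 0 := RatFunc.num_ne_zero hfne
  have hden : f.denom ≠ 0 := f.denom_ne_zero
  have key : f.num * Q = P * f.denom := by
    have h2 : algebraMap K[X] (RatFunc K) f.num / algebraMap K[X] (RatFunc K) f.denom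
        = algebraMap K[X] (RatFunc K) P / algebraMap K[X] (RatFunc K) Q := by
      rw [RatFunc.num_div_denom]
    have h3 := (div_eq_div_iff (RatFunc.algebraMap_ne_zero hden) hQ').mp h2
    apply IsFractionRing.injective K[X] (RatFunc K)
    simpa [map_mul] using h3
  have e1 : (f.num * Q).rootMultiplicity w = f.num.rootMultiplicity w + Q.rootMultiplicity w :=
    rootMultiplicity_mul (mul_ne_zero hnum hQ)
  have e2 : (P * f.denom).rootMultiplicity w = P.rootMultiplicity w + f.denom.rootMultiplicity w :=
    rootMultiplicity_mul (mul_ne_zero hP hden)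
  have := key ▸ e1
  rw [e2] at this
  unfold ordAt
  omega

lemma hasPoleAt_iff {w : K} {f : RatFunc K} : HasPoleAt f w ↔ ordAt w f < 0 := by
  constructor
  · intro h
    have hnum : f.num.eval w ≠ 0 := by
      intro hn
      obtain ⟨a, b, hab⟩ := f.isCoprime_num_denom
      have := congrArg (Polynomial.eval w) hab
      rw [Polynomial.eval_add, Polynomial.eval_mul, Polynomial.eval_mul, hn,
        show Polynomial.eval w f.denom = 0 from h, Polynomial.eval_one] at this
      simp at this
    have h1 : f.num.rootMultiplicity w = 0 := rootMultiplicity_eq_zero hnum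
    have h2 : 0 < f.denom.rootMultiplicity w := (rootMultiplicity_pos f.denom_ne_zero).2 h
    unfold ordAt; omega
  · intro h
    by_contra hp
    have h2 : f.denom.rootMultiplicity w = 0 := rootMultiplicity_eq_zero hp
    unfold ordAt at h; omega

lemma ordAt_mul (w : K) {f g : RatFunc K} (hf : f ≠ 0) (hg : g ≠ 0) :
    ordAt w (f * g) = ordAt w f + ordAt w g := by
  have h : f * g = algebraMap K[X] (RatFunc K) (f.num * g.num) /
      algebraMap K[X] (RatFunc K) (f.denom * g.denom) := by
    rw [map_mul, map_mul, ← div_mul_div_comm, RatFunc.num_div_denom, RatFunc.num_div_denom]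
  rw [h, ordAt_div w (mul_ne_zero (RatFunc.num_ne_zero hf) (RatFunc.num_ne_zero hg))
    (mul_ne_zero f.denom_ne_zero g.denom_ne_zero),
    rootMultiplicity_mul (mul_ne_zero (RatFunc.num_ne_zero hf) (RatFunc.num_ne_zero hg)),
    rootMultiplicity_mul (mul_ne_zero f.denom_ne_zero g.denom_ne_zero)]
  unfold ordAt
  push_cast
  ring

lemma ordAt_C (w : K) {a : K} (ha : a ≠ 0) : ordAt w (RatFunc.C a) = 0 := by
  unfold ordAt
  rw [RatFunc.num_C, RatFunc.denom_C]
  rw [rootMultiplicity_eq_zero (by simp [IsRoot, ha]), rootMultiplicity_eq_zero (by simp [IsRoot])]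
  simp

lemma ordAt_neg (w : K) (f : RatFunc K) : ordAt w (-f) = ordAt w f := by
  by_cases hf : f = 0
  · simp [hf]
  · have : -f = RatFunc.C (-1) * f := by
      rw [map_neg, map_one]; ring
    rw [this, ordAt_mul w (by simp) hf, ordAt_C w (by norm_num : (-1 : K) ≠ 0), zero_add]

lemma ordAt_pow (w : K) {f : RatFunc K} (hf : f ≠ 0) (n : ℕ) :
    ordAt w (f ^ n) = n * ordAt w f := by
  induction n with
  | zero => simp [ordAt, RatFunc.num_one, RatFunc.denom_one]
  | succ n ih =>
      rw [pow_succ, ordAt_mul w (pow_ne_zero n hf) hf, ih]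
      push_cast; ring

lemma rm_neg (w : K) (a : K[X]) : (-a).rootMultiplicity w = a.rootMultiplicity w := by
  by_cases ha : a = 0
  · simp [ha]
  · have : -a = Polynomial.C (-1) * a := by rw [map_neg, map_one, neg_one_mul]
    rw [this, rootMultiplicity_mul (by simpa using ha),
      rootMultiplicity_eq_zero (by simp [IsRoot]), zero_add]

lemma rm_add_of_lt {w : K} {a b : K[X]} (ha : a ≠ 0)
    (hab : a.rootMultiplicity w < b.rootMultiplicity w) :
    (a + b).rootMultiplicity w = a.rootMultiplicity w := by
  have hb : b ≠ 0 := by rintro rfl; simp at hab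
  have habne : a + b ≠ 0 := by
    rintro h
    have : b = -a := by linear_combination h
    rw [this, rm_neg] at hab; omega
  refine le_antisymm ?_ ?_
  · by_contra hlt
    push_neg at hlt
    have h1 : (X - Polynomial.C w) ^ (a.rootMultiplicity w + 1) ∣ (a + b) :=
      (le_rootMultiplicity_iff habne).1 hlt
    have h2 : (X - Polynomial.C w) ^ (a.rootMultiplicity w + 1) ∣ b :=
      (le_rootMultiplicity_iff hb).1 hab
    have h3 : (X - Polynomial.C w) ^ (a.rootMultiplicity w + 1) ∣ a := by
      simpa using dvd_sub h1 h2
    have := (le_rootMultiplicity_iff ha).2 h3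
    omega
  · have := rootMultiplicity_add w habne
    omega

lemma ordAt_add_of_lt {w : K} {f g : RatFunc K} (hf : f ≠ 0) (h : ordAt w f < ordAt w g) :
    ordAt w (f + g) = ordAt w f := by
  by_cases hg : g = 0
  · simp [hg]
  · have hrep : f + g = algebraMap K[X] (RatFunc K) (f.num * g.denom + f.denom * g.num) /
        algebraMap K[X] (RatFunc K) (f.denom * g.denom) := by
      rw [map_add, map_mul, map_mul, map_mul, ← div_add_div _ _
        (RatFunc.algebraMap_ne_zero f.denom_ne_zero) (RatFunc.algebraMap_ne_zero g.denom_ne_zero),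
        RatFunc.num_div_denom, RatFunc.num_div_denom]
    have hA : f.num * g.denom ≠ 0 := mul_ne_zero (RatFunc.num_ne_zero hf) g.denom_ne_zero
    have hB : f.denom * g.num ≠ 0 := mul_ne_zero f.denom_ne_zero (RatFunc.num_ne_zero hg)
    have eA : (f.num * g.denom).rootMultiplicity w
        = f.num.rootMultiplicity w + g.denom.rootMultiplicity w := rootMultiplicity_mul hA
    have eB : (f.denom * g.num).rootMultiplicity w
        = f.denom.rootMultiplicity w + g.num.rootMultiplicity w := rootMultiplicity_mul hB
    have hlt : (f.num * g.denom).rootMultiplicity w < (f.denom * g.num).rootMultiplicity w := by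
      unfold ordAt at h; omega
    have hN : (f.num * g.denom + f.denom * g.num).rootMultiplicity w
        = (f.num * g.denom).rootMultiplicity w := rm_add_of_lt hA hlt
    have hNne : f.num * g.denom + f.denom * g.num ≠ 0 := by
      intro h0
      have hba : f.denom * g.num = -(f.num * g.denom) := by linear_combination h0
      rw [hba, rm_neg] at hlt
      omega
    rw [hrep, ordAt_div w hNne (mul_ne_zero f.denom_ne_zero g.denom_ne_zero), hN, eA,
      rootMultiplicity_mul (mul_ne_zero f.denom_ne_zero g.denom_ne_zero)]
    unfold ordAt
    push_cast; ring

lemma ordAt_add_nonneg {w : K} {f g : RatFunc K} (hf : 0 ≤ ordAt w f) (hg : 0 ≤ ordAt w g) :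
    0 ≤ ordAt w (f + g) := by
  by_cases hf0 : f = 0
  · simpa [hf0] using hg
  by_cases hg0 : g = 0
  · simpa [hg0] using hf
  by_cases hfg : f + g = 0
  · simp [hfg, ordAt_zero]
  have hrep : f + g = algebraMap K[X] (RatFunc K) (f.num * g.denom + f.denom * g.num) /
      algebraMap K[X] (RatFunc K) (f.denom * g.denom) := by
    rw [map_add, map_mul, map_mul, map_mul, ← div_add_div _ _
      (RatFunc.algebraMap_ne_zero f.denom_ne_zero) (RatFunc.algebraMap_ne_zero g.denom_ne_zero),
      RatFunc.num_div_denom, RatFunc.num_div_denom]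
  have hA : f.num * g.denom ≠ 0 := mul_ne_zero (RatFunc.num_ne_zero hf0) g.denom_ne_zero
  have hB : f.denom * g.num ≠ 0 := mul_ne_zero f.denom_ne_zero (RatFunc.num_ne_zero hg0)
  have hNne : f.num * g.denom + f.denom * g.num ≠ 0 := by
    intro h0
    apply hfg
    rw [hrep, h0, map_zero, zero_div]
  have eA : (f.num * g.denom).rootMultiplicity w
      = f.num.rootMultiplicity w + g.denom.rootMultiplicity w := rootMultiplicity_mul hA
  have eB : (f.denom * g.num).rootMultiplicity w
      = f.denom.rootMultiplicity w + g.num.rootMultiplicity w := rootMultiplicity_mul hB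
  have hmin := rootMultiplicity_add w hNne
  rw [hrep, ordAt_div w hNne (mul_ne_zero f.denom_ne_zero g.denom_ne_zero),
    rootMultiplicity_mul (mul_ne_zero f.denom_ne_zero g.denom_ne_zero)]
  unfold ordAt at hf hg
  omega

lemma ordAt_sum_nonneg {w : K} {ι : Type*} (t : Finset ι) (F : ι → RatFunc K)
    (h : ∀ j ∈ t, 0 ≤ ordAt w (F j)) : 0 ≤ ordAt w (∑ j ∈ t, F j) := by
  induction t using Finset.cons_induction with
  | empty => simp [ordAt_zero]
  | cons x t hx ih =>
      rw [Finset.sum_cons]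
      exact ordAt_add_nonneg (h x (Finset.mem_cons_self x t))
        (ih fun j hj => h j (Finset.mem_cons_of_mem hj))

lemma rm_comp_X_add_C (P : K[X]) (v w : K) :
    (P.comp (X + Polynomial.C v)).rootMultiplicity w = P.rootMultiplicity (w + v) := by
  rw [rootMultiplicity_eq_rootMultiplicity (t := w), comp_assoc]
  have : (X + Polynomial.C v).comp (X + Polynomial.C w) = X + Polynomial.C (w + v) := by
    simp [add_comp]; ring
  rw [this, ← rootMultiplicity_eq_rootMultiplicity]

lemma ordAt_shift (f : RatFunc K) (v w : K) : ordAt w (shift v f) = ordAt (w + v) f := by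
  by_cases hf : f = 0
  · simp [hf, shift, RatFunc.num_zero, RatFunc.denom_zero, ordAt_zero]
  · have hn : f.num.comp (X + Polynomial.C v) ≠ 0 :=
      fun h0 => RatFunc.num_ne_zero hf (comp_X_add_C_eq_zero_iff.mp h0)
    have hd : f.denom.comp (X + Polynomial.C v) ≠ 0 :=
      fun h0 => f.denom_ne_zero (comp_X_add_C_eq_zero_iff.mp h0)
    rw [shift, ordAt_div w hn hd, rm_comp_X_add_C, rm_comp_X_add_C]
    rfl

lemma ordAt_X_nonneg (w : K) : 0 ≤ ordAt w (RatFunc.X : RatFunc K) := by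
  rw [← not_lt, ← hasPoleAt_iff]
  intro h
  rw [HasPoleAt, ← RatFunc.algebraMap_X, RatFunc.denom_algebraMap, Polynomial.eval_one] at h
  exact one_ne_zero h

end OrdLemmas

/-- The key step in the proof of Lemma 4.4 of the paper: if the shifted pole
`α - v_i` is not matched by any other shifted pole, then `L_{v,f}` has a pole there
of the same order `u`; since `p ∤ u`, it follows that `L_{v,f}` is not exceptional. -/
theorem statement_13 (p : ℕ) [Fact p.Prime] (s : ℕ) (hs : 1 ≤ s)
    (f : RatFunc (AlgebraicClosure (ZMod p))) (α : AlgebraicClosure (ZMod p))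
    (u : ℕ) (hu : 0 < u) (hpu : ¬ p ∣ u)
    (hpole : HasPoleAt f α) (hord : ordAt α f = -(u : ℤ))
    (v : Fin (s + s) → AlgebraicClosure (ZMod p)) (i : Fin (s + s))
    (hi : ∀ α' : AlgebraicClosure (ZMod p), HasPoleAt f α' →
      ∀ j : Fin (s + s), j ≠ i → α - v i ≠ α' - v j) :
    HasPoleAt (Lvf s f v) (α - v i) ∧ ordAt (α - v i) (Lvf s f v) = -(u : ℤ) ∧
      ¬ MemE p (Lvf s f v) := by
  classical
  have huZ : (0 : ℤ) < (u : ℤ) := by exact_mod_cast hu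
  set β := α - v i with hβ
  have hii : ordAt β (shift (v i) f) = -(u : ℤ) := by
    rw [ordAt_shift, hβ, sub_add_cancel, hord]
  have hothers : ∀ j : Fin (s + s), j ≠ i → 0 ≤ ordAt β (shift (v j) f) := by
    intro j hj
    rw [ordAt_shift]
    by_contra hneg
    push_neg at hneg
    have hpole' : HasPoleAt f (β + v j) := hasPoleAt_iff.2 hneg
    exact hi (β + v j) hpole' j hj (by rw [add_sub_cancel_right])
  set T : Fin s → RatFunc (AlgebraicClosure (ZMod p)) := fun k =>
    shift (v (k.castAdd s)) f - shift (v (k.addNat s)) f with hT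
  have key : ∃ i0 : Fin s, ordAt β (T i0) = -(u : ℤ) ∧
      ∀ k : Fin s, k ≠ i0 → 0 ≤ ordAt β (T k) := by
    rcases lt_or_ge (i : ℕ) s with hlt | hge
    · refine ⟨⟨(i : ℕ), hlt⟩, ?_, ?_⟩
      · have hci : (⟨(i : ℕ), hlt⟩ : Fin s).castAdd s = i := by ext; rfl
        have hne : (⟨(i : ℕ), hlt⟩ : Fin s).addNat s ≠ i := by
          intro h
          have := congrArg Fin.val h
          simp only [Fin.coe_addNat] at this
          omega
        have h2 := hothers _ hne
        simp only [hT]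
        simp only [hci]
        rw [sub_eq_add_neg, ordAt_add_of_lt
          (ne_zero_of_ordAt_ne_zero (by rw [hii]; omega))
          (by rw [ordAt_neg, hii]; omega), hii]
      · intro k hk
        have hne1 : k.castAdd s ≠ i := by
          intro h
          apply hk
          ext
          have := congrArg Fin.val h
          simpa using this
        have hne2 : k.addNat s ≠ i := by
          intro h
          have := congrArg Fin.val h
          simp only [Fin.coe_addNat] at this
          omega
        simp only [hT]
        rw [sub_eq_add_neg]
        exact ordAt_add_nonneg (hothers _ hne1) (by rw [ordAt_neg]; exact hothers _ hne2)
    · have hilt : (i : ℕ) < s + s := i.isLt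
      refine ⟨⟨(i : ℕ) - s, by omega⟩, ?_, ?_⟩
      · have hai : (⟨(i : ℕ) - s, by omega⟩ : Fin s).addNat s = i := by
          ext
          simp only [Fin.coe_addNat]
          omega
        have hne : (⟨(i : ℕ) - s, by omega⟩ : Fin s).castAdd s ≠ i := by
          intro h
          have := congrArg Fin.val h
          simp only [Fin.coe_castAdd] at this
          omega
        have h2 := hothers _ hne
        simp only [hT]
        simp only [hai]
        rw [sub_eq_neg_add, ordAt_add_of_lt
          (ne_zero_of_ordAt_ne_zero (by rw [ordAt_neg, hii]; omega))
          (by rw [ordAt_neg, hii]; omega), ordAt_neg, hii]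
      · intro k hk
        have hne1 : k.castAdd s ≠ i := by
          intro h
          have := congrArg Fin.val h
          simp only [Fin.coe_castAdd] at this
          apply hk
          ext
          simp only [this]
          omega
        have hne2 : k.addNat s ≠ i := by
          intro h
          apply hk
          have := congrArg Fin.val h
          simp only [Fin.coe_addNat] at this
          ext
          show (k : ℕ) = (i : ℕ) - s
          omega
        simp only [hT]
        rw [sub_eq_add_neg]
        exact ordAt_add_nonneg (hothers _ hne1) (by rw [ordAt_neg]; exact hothers _ hne2)
  obtain ⟨i0, hi0, hrest⟩ := key
  have hLvf : Lvf s f v = ∑ k : Fin s, T k := rfl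
  have hsum : ordAt β (Lvf s f v) = -(u : ℤ) := by
    have hge0 : 0 ≤ ordAt β (∑ k ∈ Finset.univ.erase i0, T k) :=
      ordAt_sum_nonneg _ _ (fun j hj => hrest j (Finset.ne_of_mem_erase hj))
    rw [hLvf, ← Finset.add_sum_erase Finset.univ T (Finset.mem_univ i0)]
    rw [ordAt_add_of_lt (ne_zero_of_ordAt_ne_zero (by rw [hi0]; omega))
      (by rw [hi0]; omega), hi0]
  refine ⟨hasPoleAt_iff.2 (by rw [hsum]; omega), hsum, ?_⟩
  rintro ⟨a, b, h, heq⟩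
  rw [heq] at hsum
  have hX : 0 ≤ ordAt β (RatFunc.C b * RatFunc.X) := by
    by_cases hb : b = 0
    · simp [hb, ordAt_zero]
    · have hCb : RatFunc.C b ≠ 0 := by
        rw [← RatFunc.algebraMap_C]
        exact RatFunc.algebraMap_ne_zero (by simpa using hb)
      rw [ordAt_mul β hCb RatFunc.X_ne_zero, ordAt_C β hb, zero_add]
      exact ordAt_X_nonneg β
  rcases lt_or_ge (ordAt β h) 0 with hneg | hnn
  · have hh : h ≠ 0 := ne_zero_of_ordAt_ne_zero hneg.ne
    have hp2 : (2 : ℤ) ≤ (p : ℤ) := by exact_mod_cast (Fact.out : p.Prime).two_le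
    have hpow : ordAt β (h ^ p) = (p : ℤ) * ordAt β h := ordAt_pow β hh p
    have hlt2 : (p : ℤ) * ordAt β h < ordAt β h := by nlinarith
    have hdiff : ordAt β (h ^ p - h) = (p : ℤ) * ordAt β h := by
      rw [sub_eq_add_neg, ordAt_add_of_lt (pow_ne_zero p hh)
        (by rw [ordAt_neg]; rw [hpow]; exact hlt2), hpow]
    by_cases ha : a = 0
    · rw [ha] at hsum
      simp only [map_zero, zero_mul, zero_add] at hsum
      rw [hsum] at hX
      omega
    · have hCa : RatFunc.C a ≠ 0 := by
        rw [← RatFunc.algebraMap_C]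
        exact RatFunc.algebraMap_ne_zero (by simpa using ha)
      have h1 : ordAt β (RatFunc.C a * (h ^ p - h)) = (p : ℤ) * ordAt β h := by
        rw [ordAt_mul β hCa (ne_zero_of_ordAt_ne_zero (by rw [hdiff]; nlinarith)),
          ordAt_C β ha, zero_add, hdiff]
      rw [ordAt_add_of_lt (ne_zero_of_ordAt_ne_zero (by rw [h1]; nlinarith))
        (by rw [h1]; nlinarith), h1] at hsum
      apply hpu
      have hdvd : (p : ℤ) ∣ (u : ℤ) := ⟨-(ordAt β h), by linarith⟩
      exact_mod_cast hdvd
  · have hdiff : 0 ≤ ordAt β (h ^ p - h) := by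
      by_cases hh : h = 0
      · rw [hh, zero_pow (Fact.out : p.Prime).ne_zero, sub_zero, ordAt_zero]
      · rw [sub_eq_add_neg]
        refine ordAt_add_nonneg ?_ (by rw [ordAt_neg]; exact hnn)
        rw [ordAt_pow β hh]
        positivity
    have h1 : 0 ≤ ordAt β (RatFunc.C a * (h ^ p - h)) := by
      by_cases ha : a = 0
      · simp [ha, ordAt_zero]
      by_cases hd : h ^ p - h = 0
      · simp [hd, ordAt_zero]
      have hCa : RatFunc.C a ≠ 0 := by
        rw [← RatFunc.algebraMap_C]
        exact RatFunc.algebraMap_ne_zero (by simpa using ha)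
      rw [ordAt_mul β hCa hd, ordAt_C β ha, zero_add]
      exact hdiff
    have hfin := ordAt_add_nonneg h1 hX
    rw [hsum] at hfin
    omega

end RestrictedCoords
end
end
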